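/- arXiv:1810.03463 — 3 statements merged into one kernel-verified Lean document; each statement's English description precedes it below -/
import Mathlib

section
/- Let M > 0, p ∈ ℕ, and K ∈ ℕ, and let 𝔖(K) denote the set of all continuous functions f : [-M,M]^p → ℝ^K. Then the infimum over f ∈ 𝔖(K) of (1/(2M)^{2p}) ∫_{[-M,M]^p} ∫_{[-M,M]^p} | -‖x - x'‖₂² - ⟨f(x), f(x')⟩ | dx dx' is at least 2pM²/3. In particular, the inner-product similarity model cannot approximate the negative squared distance similarity arbitrarily well in L¹ average, regardless of the output dimension K. -/
open MeasureTheory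

section Aux

variable (p : ℕ) (M : ℝ)

lemma cube_pi_integral (g : Fin p → ℝ → ℝ) :
    ∫ y in Set.pi Set.univ (fun _ : Fin p => Set.Icc (-M) M), ∏ j, g j (y j)
      = ∏ j, ∫ s in Set.Icc (-M) M, g j s := by
  have ht : ∀ j : Fin p, MeasurableSet (Set.Icc (-M) M) := fun _ => measurableSet_Icc
  rw [← integral_indicator (MeasurableSet.univ_pi ht)]
  have h : ∀ y : Fin p → ℝ,
      (Set.pi Set.univ fun _ : Fin p => Set.Icc (-M) M).indicator
        (fun y => ∏ j, g j (y j)) y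
      = ∏ j, (Set.Icc (-M) M).indicator (g j) (y j) := by
    intro y
    by_cases h : y ∈ Set.pi Set.univ fun _ : Fin p => Set.Icc (-M) M
    · rw [Set.indicator_of_mem h]
      exact Finset.prod_congr rfl fun j _ =>
        (Set.indicator_of_mem (h j (Set.mem_univ j)) _).symm
    · rw [Set.indicator_of_notMem h]
      rw [Set.mem_univ_pi] at h
      push_neg at h
      obtain ⟨j, hj⟩ := h
      exact (Finset.prod_eq_zero (Finset.mem_univ j) (Set.indicator_of_notMem hj _)).symm
  simp_rw [h]
  rw [volume_pi, MeasureTheory.integral_fintype_prod_eq_prod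
    (fun j => (Set.Icc (-M) M).indicator (g j))]
  exact Finset.prod_congr rfl fun j _ => integral_indicator (ht j)

lemma cube_preimage :
    {x : EuclideanSpace ℝ (Fin p) | ∀ i, |x i| ≤ M}
      = (MeasurableEquiv.toLp 2 (Fin p → ℝ)).symm ⁻¹'
          (Set.pi Set.univ fun _ : Fin p => Set.Icc (-M) M) := by
  ext x
  simp only [Set.mem_setOf_eq, Set.mem_preimage, Set.mem_pi, Set.mem_univ, forall_true_left,
    Set.mem_Icc, abs_le, MeasurableEquiv.toLp_symm_apply, true_implies]

lemma coord_integral (hM : 0 < M) (i : Fin p) (u : ℝ → ℝ) :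
    ∫ x in {x : EuclideanSpace ℝ (Fin p) | ∀ i, |x i| ≤ M}, u (x i)
      = (∫ s in Set.Icc (-M) M, u s) * (2 * M) ^ (p - 1) := by
  have h1 : (∫ x in (MeasurableEquiv.toLp 2 (Fin p → ℝ)).symm ⁻¹'
        (Set.pi Set.univ fun _ : Fin p => Set.Icc (-M) M),
        (fun y : Fin p → ℝ => u (y i)) ((MeasurableEquiv.toLp 2 (Fin p → ℝ)).symm x))
      = ∫ y in Set.pi Set.univ fun _ : Fin p => Set.Icc (-M) M, u (y i) := by
    exact (EuclideanSpace.volume_preserving_symm_measurableEquiv_toLp (Fin p)).setIntegral_preimage_emb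
      (MeasurableEquiv.measurableEmbedding _) (fun y : Fin p → ℝ => u (y i)) _
  have h2 : ∫ x in {x : EuclideanSpace ℝ (Fin p) | ∀ i, |x i| ≤ M}, u (x i)
      = ∫ y in Set.pi Set.univ fun _ : Fin p => Set.Icc (-M) M, u (y i) := by
    rw [cube_preimage p M]
    exact h1
  rw [h2]
  have h3 : ∀ y : Fin p → ℝ, u (y i)
      = ∏ j, (fun s => if j = i then u s else 1) (y j) := by
    intro y
    simp only []
    rw [Finset.prod_ite_eq' Finset.univ i (fun j => u (y j))]
    simp
  rw [show (fun y : Fin p → ℝ => u (y i))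
      = fun y => ∏ j, (fun s => if j = i then u s else 1) (y j) from funext h3]
  rw [cube_pi_integral p M (fun j s => if j = i then u s else 1)]
  have h4 : ∀ j : Fin p, (∫ s in Set.Icc (-M) M, if j = i then u s else (1:ℝ))
      = if j = i then (∫ s in Set.Icc (-M) M, u s) else (2 * M) := by
    intro j
    split_ifs with h
    · rfl
    · rw [setIntegral_const, measureReal_def, Real.volume_Icc, smul_eq_mul, mul_one,
        ENNReal.toReal_ofReal (by linarith)]
      ring
  simp_rw [h4]
  rw [← Finset.prod_erase_mul Finset.univ _ (Finset.mem_univ i)]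
  rw [if_pos rfl]
  rw [Finset.prod_congr rfl (fun j hj => if_neg (Finset.ne_of_mem_erase hj)),
    Finset.prod_const, Finset.card_erase_of_mem (Finset.mem_univ i), Finset.card_univ,
    Fintype.card_fin, mul_comm]

end Aux


/-- The inner-product similarity model cannot approximate the negative squared distance
similarity arbitrarily well in `L¹` average over the cube `[-M,M]ᵖ`, regardless of the
output dimension `K`: for every continuous `f : [-M,M]ᵖ → ℝᴷ`,
`(1/(2M)^{2p}) ∬ |-‖x - x'‖₂² - ⟨f(x), f(x')⟩| dx dx' ≥ 2pM²/3`. -/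
theorem ips_l1_lower_bound_for_nsd (p K : ℕ) (M : ℝ) (hM : 0 < M)
    (f : EuclideanSpace ℝ (Fin p) → EuclideanSpace ℝ (Fin K)) (hf : Continuous f) :
    2 * p * M ^ 2 / 3 ≤
      (1 / (2 * M) ^ (2 * p)) *
        ∫ x in {x : EuclideanSpace ℝ (Fin p) | ∀ i, |x i| ≤ M},
          ∫ x' in {x : EuclideanSpace ℝ (Fin p) | ∀ i, |x i| ≤ M},
            |(-‖x - x'‖ ^ 2 - (inner ℝ (f x) (f x') : ℝ))| := by
  set S : Set (EuclideanSpace ℝ (Fin p)) := {x : EuclideanSpace ℝ (Fin p) | ∀ i, |x i| ≤ M}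
    with hSdef
  set V : ℝ := (2 * M) ^ p with hVdef
  have hVpos : 0 < V := pow_pos (by linarith) p
  -- compactness and measurability of S
  have hTcompact : IsCompact (Set.pi Set.univ fun _ : Fin p => Set.Icc (-M) M) :=
    isCompact_univ_pi fun _ => isCompact_Icc
  have hpre2 : S = (EuclideanSpace.equiv (Fin p) ℝ) ⁻¹'
      (Set.pi Set.univ fun _ : Fin p => Set.Icc (-M) M) := by
    rw [hSdef]
    ext x
    simp only [Set.mem_setOf_eq, Set.mem_preimage, Set.mem_pi, Set.mem_univ, forall_true_left,
      Set.mem_Icc, abs_le, true_implies]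
    exact Iff.rfl
  have hScompact : IsCompact S := by
    rw [hpre2]
    exact (EuclideanSpace.equiv (Fin p) ℝ).toHomeomorph.isCompact_preimage.mpr hTcompact
  have hSfin : volume S < ⊤ := hScompact.measure_lt_top
  -- volume of S
  have hvolS : (volume S).toReal = V := by
    rw [hSdef, cube_preimage p M,
      (EuclideanSpace.volume_preserving_symm_measurableEquiv_toLp (Fin p)).measure_preimage
        ((MeasurableSet.univ_pi fun _ => measurableSet_Icc).nullMeasurableSet)]
    rw [volume_pi_pi]
    simp only [Real.volume_Icc]
    rw [Finset.prod_const, Finset.card_univ, Fintype.card_fin,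
      show M - -M = 2 * M by ring, ← ENNReal.ofReal_pow (by linarith),
      ENNReal.toReal_ofReal (by positivity)]
  -- integrability helpers
  have hint : ∀ {g : EuclideanSpace ℝ (Fin p) → ℝ}, Continuous g → IntegrableOn g S volume :=
    fun hg => hg.continuousOn.integrableOn_compact hScompact
  have hfint : IntegrableOn f S volume := hf.continuousOn.integrableOn_compact hScompact
  have hconst : ∀ c : ℝ, IntegrableOn (fun _ : EuclideanSpace ℝ (Fin p) => c) S volume :=
    fun c => integrableOn_const hSfin.ne
  have hcoord : ∀ i : Fin p, Continuous fun x : EuclideanSpace ℝ (Fin p) => x i := fun i =>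
    (EuclideanSpace.proj (𝕜 := ℝ) i).continuous
  -- the two 1-D moments
  have I1 : ∀ i : Fin p, ∫ x in S, x i = 0 := by
    intro i
    rw [hSdef, coord_integral p M hM i (fun s => s)]
    rw [integral_Icc_eq_integral_Ioc, ← intervalIntegral.integral_of_le (by linarith : -M ≤ M),
      integral_id]
    ring
  have I2 : ∀ i : Fin p, ∫ x in S, (x i) ^ 2 = V * (M ^ 2 / 3) := by
    intro i
    rw [hSdef, coord_integral p M hM i (fun s => s ^ 2)]
    rw [integral_Icc_eq_integral_Ioc, ← intervalIntegral.integral_of_le (by linarith : -M ≤ M),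
      integral_pow]
    have hp : p - 1 + 1 = p := Nat.succ_pred_eq_of_pos i.pos
    have h2 : V = (2 * M) ^ (p - 1) * (2 * M) := by
      rw [hVdef, ← pow_succ, hp]
    rw [h2]
    push_cast
    ring
  -- norm expansion
  have norm_expand : ∀ x x' : EuclideanSpace ℝ (Fin p), ‖x - x'‖ ^ 2 = ∑ i, (x i - x' i) ^ 2 := by
    intro x x'
    rw [EuclideanSpace.norm_eq, Real.sq_sqrt (Finset.sum_nonneg fun i _ => sq_nonneg _)]
    refine Finset.sum_congr rfl fun i _ => ?_
    simp [Real.norm_eq_abs, sq_abs]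
  -- product measure setup
  have hρ : (volume.restrict S).prod (volume.restrict S)
      = (volume.prod volume).restrict (S ×ˢ S) := Measure.prod_restrict S S
  have hSS : IsCompact (S ×ˢ S) := hScompact.prod hScompact
  have hcont_n : Continuous (fun z : EuclideanSpace ℝ (Fin p) × EuclideanSpace ℝ (Fin p) =>
      ‖z.1 - z.2‖ ^ 2) := (continuous_fst.sub continuous_snd).norm.pow 2
  have hcont_i : Continuous (fun z : EuclideanSpace ℝ (Fin p) × EuclideanSpace ℝ (Fin p) =>
      (inner ℝ (f z.1) (f z.2) : ℝ)) := by
    exact Continuous.inner (hf.comp continuous_fst) (hf.comp continuous_snd)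
  have hcont_g : Continuous (fun z : EuclideanSpace ℝ (Fin p) × EuclideanSpace ℝ (Fin p) =>
      -‖z.1 - z.2‖ ^ 2 - (inner ℝ (f z.1) (f z.2) : ℝ)) := hcont_n.neg.sub hcont_i
  have hint_g : Integrable (fun z : EuclideanSpace ℝ (Fin p) × EuclideanSpace ℝ (Fin p) =>
      -‖z.1 - z.2‖ ^ 2 - (inner ℝ (f z.1) (f z.2) : ℝ)) ((volume.restrict S).prod (volume.restrict S)) := by
    rw [hρ]
    exact hcont_g.continuousOn.integrableOn_compact hSS
  have hint_n : Integrable (fun z : EuclideanSpace ℝ (Fin p) × EuclideanSpace ℝ (Fin p) =>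
      ‖z.1 - z.2‖ ^ 2) ((volume.restrict S).prod (volume.restrict S)) := by
    rw [hρ]
    exact hcont_n.continuousOn.integrableOn_compact hSS
  have hint_i : Integrable (fun z : EuclideanSpace ℝ (Fin p) × EuclideanSpace ℝ (Fin p) =>
      (inner ℝ (f z.1) (f z.2) : ℝ)) ((volume.restrict S).prod (volume.restrict S)) := by
    rw [hρ]
    exact hcont_i.continuousOn.integrableOn_compact hSS
  -- product/iterated conversions
  have stepA : ∫ x in S, ∫ x' in S, |(-‖x - x'‖ ^ 2 - (inner ℝ (f x) (f x') : ℝ))|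
      = ∫ z, |(-‖z.1 - z.2‖ ^ 2 - (inner ℝ (f z.1) (f z.2) : ℝ))| ∂((volume.restrict S).prod (volume.restrict S)) := by
    exact integral_integral hint_g.abs
  have prodn : ∫ z, ‖z.1 - z.2‖ ^ 2 ∂((volume.restrict S).prod (volume.restrict S)) = ∫ x in S, ∫ x' in S, ‖x - x'‖ ^ 2 := by
    exact (integral_integral (f := fun x x' : EuclideanSpace ℝ (Fin p) => ‖x - x'‖ ^ 2) hint_n).symm
  have prodi : ∫ z, (inner ℝ (f z.1) (f z.2) : ℝ) ∂((volume.restrict S).prod (volume.restrict S))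
      = ∫ x in S, ∫ x' in S, (inner ℝ (f x) (f x') : ℝ) := by
    exact (integral_integral (f := fun x x' : EuclideanSpace ℝ (Fin p) => (inner ℝ (f x) (f x') : ℝ)) hint_i).symm
  -- Step B : lower bound by -g
  have stepB : ∫ z, -(-‖z.1 - z.2‖ ^ 2 - (inner ℝ (f z.1) (f z.2) : ℝ)) ∂((volume.restrict S).prod (volume.restrict S))
      ≤ ∫ z, |(-‖z.1 - z.2‖ ^ 2 - (inner ℝ (f z.1) (f z.2) : ℝ))| ∂((volume.restrict S).prod (volume.restrict S)) :=
    integral_mono hint_g.neg hint_g.abs fun z => neg_le_abs _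
  -- Step C : split -g
  have stepC : ∫ z, -(-‖z.1 - z.2‖ ^ 2 - (inner ℝ (f z.1) (f z.2) : ℝ)) ∂((volume.restrict S).prod (volume.restrict S))
      = (∫ z, ‖z.1 - z.2‖ ^ 2 ∂((volume.restrict S).prod (volume.restrict S))) + ∫ z, (inner ℝ (f z.1) (f z.2) : ℝ) ∂((volume.restrict S).prod (volume.restrict S)) := by
    rw [← integral_add hint_n hint_i]
    congr 1
    funext z
    ring
  -- Step D : inner product term is nonnegative
  have stepD : 0 ≤ ∫ z, (inner ℝ (f z.1) (f z.2) : ℝ) ∂((volume.restrict S).prod (volume.restrict S)) := by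
    rw [prodi]
    have h2 : ∀ x : EuclideanSpace ℝ (Fin p), ∫ x' in S, (inner ℝ (f x) (f x') : ℝ)
        = (inner ℝ (f x) (∫ x' in S, f x') : ℝ) := fun x => integral_inner hfint (f x)
    simp_rw [h2]
    rw [show (fun x : EuclideanSpace ℝ (Fin p) => (inner ℝ (f x) (∫ x' in S, f x') : ℝ))
        = fun x => (inner ℝ (∫ x' in S, f x') (f x) : ℝ) from funext fun x => real_inner_comm _ _]
    rw [integral_inner hfint]
    exact real_inner_self_nonneg
  -- Step E : the distance term
  have stepE : ∫ z, ‖z.1 - z.2‖ ^ 2 ∂((volume.restrict S).prod (volume.restrict S)) = V ^ 2 * (2 * p * M ^ 2 / 3) := by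
    rw [prodn]
    have inner_int : ∀ x : EuclideanSpace ℝ (Fin p), ∫ x' in S, ‖x - x'‖ ^ 2
        = ∑ i, ((x i) ^ 2 * V + V * (M ^ 2 / 3)) := by
      intro x
      simp_rw [norm_expand x]
      rw [integral_finset_sum _ fun i _ => hint (g := fun x' => (x i - x' i) ^ 2) ((continuous_const.sub (hcoord i)).pow 2)]
      refine Finset.sum_congr rfl fun i _ => ?_
      have expand : ∀ x' : EuclideanSpace ℝ (Fin p), (x i - x' i) ^ 2
          = (x i) ^ 2 - 2 * x i * x' i + (x' i) ^ 2 := fun x' => by ring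
      have ia : IntegrableOn (fun x' : EuclideanSpace ℝ (Fin p) => x i ^ 2 - 2 * x i * x' i) S
          volume := by exact (hconst _).sub ((hint (hcoord i)).const_mul _)
      have ib : IntegrableOn (fun x' : EuclideanSpace ℝ (Fin p) => (x' i) ^ 2) S volume :=
        hint ((hcoord i).pow 2)
      simp_rw [expand]
      rw [integral_add ia ib, integral_sub (hconst _) ((hint (hcoord i)).const_mul _),
        integral_const_mul, I1 i, I2 i, setIntegral_const, measureReal_def, hvolS, smul_eq_mul]
      ring
    simp_rw [inner_int]
    have osum : ∀ i : Fin p, IntegrableOn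
        (fun x : EuclideanSpace ℝ (Fin p) => (x i) ^ 2 * V + V * (M ^ 2 / 3)) S volume :=
      fun i => by exact ((hint ((hcoord i).pow 2)).mul_const V).add (hconst _)
    rw [integral_finset_sum _ fun i _ => osum i]
    have per : ∀ i : Fin p, ∫ x in S, ((x i) ^ 2 * V + V * (M ^ 2 / 3))
        = V * (M ^ 2 / 3) * V + V * (V * (M ^ 2 / 3)) := by
      intro i
      have oa : IntegrableOn (fun x : EuclideanSpace ℝ (Fin p) => (x i) ^ 2 * V) S volume := by
        exact (hint ((hcoord i).pow 2)).mul_const V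
      rw [integral_add oa (hconst _), integral_mul_const, I2 i, setIntegral_const, measureReal_def, hvolS,
        smul_eq_mul]
    rw [Finset.sum_congr rfl fun i _ => per i, Finset.sum_const, Finset.card_univ,
      Fintype.card_fin, nsmul_eq_mul]
    ring
  -- Assemble
  have key : V ^ 2 * (2 * p * M ^ 2 / 3)
      ≤ ∫ x in S, ∫ x' in S, |(-‖x - x'‖ ^ 2 - (inner ℝ (f x) (f x') : ℝ))| := by
    rw [stepA]
    calc V ^ 2 * (2 * p * M ^ 2 / 3)
        ≤ V ^ 2 * (2 * p * M ^ 2 / 3) + ∫ z, (inner ℝ (f z.1) (f z.2) : ℝ) ∂((volume.restrict S).prod (volume.restrict S)) := by linarith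
      _ = ∫ z, -(-‖z.1 - z.2‖ ^ 2 - (inner ℝ (f z.1) (f z.2) : ℝ)) ∂((volume.restrict S).prod (volume.restrict S)) := by rw [stepC, stepE]
      _ ≤ _ := stepB
  have hpow : (2 * M) ^ (2 * p) = V ^ 2 := by
    rw [hVdef, ← pow_mul, mul_comm p 2]
  rw [hpow]
  calc 2 * p * M ^ 2 / 3 = 1 / V ^ 2 * (V ^ 2 * (2 * p * M ^ 2 / 3)) := by field_simp
    _ ≤ 1 / V ^ 2 * ∫ x in S, ∫ x' in S, |(-‖x - x'‖ ^ 2 - (inner ℝ (f x) (f x') : ℝ))| :=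
        mul_le_mul_of_nonneg_left key (by positivity)
end

section
/- (Approximation theorem for IPS.) Let X = [-M,M]^p with M > 0, let Y ⊂ ℝ^{K*} be a compact set for some K* ∈ ℕ, let f* : X → Y be continuous, and let g* : Y × Y → ℝ be a positive definite kernel. Let σ : ℝ → ℝ be either the ReLU function or a non-constant, continuous, bounded, monotonically increasing function. Then for every ε > 0 there exist K ∈ ℕ, m ∈ ℕ, and matrices A ∈ ℝ^{K×m}, B ∈ ℝ^{m×p}, and a vector c ∈ ℝ^m such that, writing f_NN(x) = A σ(B x + c) with σ applied elementwise, |g*(f*(x), f*(x')) − ⟨f_NN(x), f_NN(x')⟩| < ε for all (x, x') ∈ X × X. -/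
set_option maxHeartbeats 1000000

open Finset Filter Matrix

namespace IPS

/-- single-unit ridge functions in one variable -/
def ridge1 (σ : ℝ → ℝ) : Set (ℝ → ℝ) := {φ | ∃ b c : ℝ, φ = fun t => σ (b * t + c)}

/-- single hidden-unit functions on `Fin p → ℝ` -/
def ridgeP (σ : ℝ → ℝ) (p : ℕ) : Set ((Fin p → ℝ) → ℝ) :=
  {φ | ∃ (w : Fin p → ℝ) (c : ℝ), φ = fun x => σ ((∑ j, w j * x j) + c)}

def cube (p : ℕ) (M : ℝ) : Set (Fin p → ℝ) := {x | ∀ i, |x i| ≤ M}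

lemma hat_eq (Δ u : ℝ) (hΔ : 0 ≤ Δ) :
    max 0 (Δ - |u|) = max 0 (u + Δ) - 2 * max 0 u + max 0 (u - Δ) := by
  rcases abs_cases u with ⟨h1, h2⟩ | ⟨h1, h2⟩ <;>
    simp only [max_def] <;> split_ifs <;> linarith


lemma exists_node_interval (R : ℝ) (hR : 0 < R) (N : ℕ) (hN : 0 < N) (t : ℝ)
    (ht : t ∈ Set.Icc (-R) R) :
    ∃ k : ℕ, k + 1 ≤ N ∧ -R + k * (2 * R / N) ≤ t ∧ t ≤ -R + (k + 1) * (2 * R / N) := by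
  obtain ⟨ht1, ht2⟩ := ht
  have hΔ : (0:ℝ) < 2 * R / N := by positivity
  have htR : 0 ≤ t + R := by linarith
  set k : ℕ := min (N - 1) (⌊(t + R) / (2 * R / N)⌋₊) with hkdef
  refine ⟨k, ?_, ?_, ?_⟩
  · have : k ≤ N - 1 := min_le_left _ _
    omega
  · have h1 : (k : ℝ) ≤ (t + R) / (2 * R / N) := by
      calc (k : ℝ) ≤ (⌊(t + R) / (2 * R / N)⌋₊ : ℝ) := Nat.cast_le.mpr (min_le_right _ _)
        _ ≤ (t + R) / (2 * R / N) := Nat.floor_le (by positivity)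
    nlinarith [(le_div_iff₀ hΔ).mp h1]
  · rcases le_total (⌊(t + R) / (2 * R / N)⌋₊) (N - 1) with h | h
    · rw [hkdef, min_eq_right h]
      have h2 : (t + R) / (2 * R / N) < ⌊(t + R) / (2 * R / N)⌋₊ + 1 := Nat.lt_floor_add_one _
      have := (div_lt_iff₀ hΔ).mp h2
      push_cast at this ⊢
      nlinarith
    · rw [hkdef, min_eq_left h]
      have hNc : ((N - 1 : ℕ) : ℝ) + 1 = (N : ℝ) := by
        have : 1 ≤ N := hN
        push_cast [Nat.cast_sub this]
        ring
      rw [hNc]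
      have : (N : ℝ) * (2 * R / N) = 2 * R := by
        field_simp
      nlinarith


lemma const_mem_span (σ : ℝ → ℝ) (z₀ : ℝ) (hz : σ z₀ ≠ 0) (r : ℝ) :
    (fun _ : ℝ => r) ∈ Submodule.span ℝ (ridge1 σ) := by
  have : (fun _ : ℝ => r) = (r / σ z₀) • (fun t : ℝ => σ (0 * t + z₀)) := by
    funext t
    simp only [Pi.smul_apply, smul_eq_mul, zero_mul, zero_add]
    field_simp
  rw [this]
  exact Submodule.smul_mem _ _ (Submodule.subset_span ⟨0, z₀, rfl⟩)


lemma relu_oneD (σ : ℝ → ℝ) (hs : σ = fun z => max 0 z)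
    (f : ℝ → ℝ) (hf : Continuous f) (R η : ℝ) (hR : 0 < R) (hη : 0 < η) :
    ∃ F ∈ Submodule.span ℝ (ridge1 σ), ∀ t ∈ Set.Icc (-R) R, |f t - F t| < η := by
  subst hs
  obtain ⟨δ, hδ, hudc⟩ := Metric.uniformContinuousOn_iff.mp
    ((isCompact_Icc (a := -R) (b := R)).uniformContinuousOn_of_continuous hf.continuousOn)
    (η/2) (by linarith)
  set N : ℕ := ⌈2*R/δ⌉₊ + 1 with hNdef
  have hN : 0 < N := Nat.succ_pos _
  set Δ : ℝ := 2*R/N with hΔdef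
  have hΔpos : 0 < Δ := by positivity
  have hΔδ : Δ < δ := by
    rw [hΔdef, div_lt_iff₀ (by positivity)]
    have h1 : 2*R/δ < N := by
      have h2 : (⌈2*R/δ⌉₊ : ℝ) < N := by exact_mod_cast Nat.lt_succ_self _
      nlinarith [Nat.le_ceil (2*R/δ)]
    have := (div_lt_iff₀ hδ).mp h1
    linarith
  set node : ℕ → ℝ := fun j => -R + j * Δ with hnodedef
  have hnode_mem : ∀ j, j ≤ N → node j ∈ Set.Icc (-R) R := by
    intro j hj
    have hjc : (j:ℝ) ≤ N := Nat.cast_le.mpr hj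
    constructor
    · simp only [hnodedef]
      nlinarith [hΔpos, Nat.cast_nonneg (α := ℝ) j]
    · have : (j:ℝ) * Δ ≤ N * Δ := by nlinarith [hjc, hΔpos]
      have hNΔ : (N:ℝ) * Δ = 2*R := by
        rw [hΔdef]; field_simp
      simp only [hnodedef]; nlinarith
  set F : ℝ → ℝ := fun t => ∑ j ∈ range (N+1), (f (node j)/Δ) * max 0 (Δ - |t - node j|)
    with hFdef
  refine ⟨F, ?_, ?_⟩
  · -- membership in the span
    have hFsum : F = ∑ j ∈ range (N+1),
        (fun t => (f (node j)/Δ) * max 0 (Δ - |t - node j|)) := by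
      funext t
      rw [hFdef]
      simp [Finset.sum_apply]
    rw [hFsum]
    apply Submodule.sum_mem
    intro j _
    have hfuneq : (fun t => (f (node j)/Δ) * max 0 (Δ - |t - node j|))
        = (f (node j)/Δ) • ((fun t => max 0 ((1:ℝ) * t + (Δ - node j)))
            - (2:ℝ) • (fun t => max 0 ((1:ℝ) * t + (-node j)))
            + (fun t => max 0 ((1:ℝ) * t + (-Δ - node j)))) := by
      funext t
      have h1 : (1:ℝ) * t + (Δ - node j) = (t - node j) + Δ := by ring
      have h2 : (1:ℝ) * t + (-node j) = t - node j := by ring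
      have h3 : (1:ℝ) * t + (-Δ - node j) = (t - node j) - Δ := by ring
      simp only [Pi.smul_apply, Pi.add_apply, Pi.sub_apply, smul_eq_mul, h1, h2, h3]
      rw [hat_eq Δ (t - node j) hΔpos.le]
    show (fun t => (f (node j)/Δ) * max 0 (Δ - |t - node j|)) ∈ _
    rw [hfuneq]
    refine Submodule.smul_mem _ _ (Submodule.add_mem _ (Submodule.sub_mem _ ?_
      (Submodule.smul_mem _ _ ?_)) ?_) <;>
      exact Submodule.subset_span ⟨1, _, rfl⟩
  · intro t ht
    obtain ⟨k, hk1, hk2, hk3⟩ := exists_node_interval R hR N hN t ht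
    have hnodek : node k ≤ t := hk2
    have hnodek1 : t ≤ node (k+1) := by
      simp only [hnodedef]; push_cast; rw [hΔdef]; exact hk3
    have hstep : node (k+1) = node k + Δ := by
      simp only [hnodedef]; push_cast; ring
    -- values of the hats
    have hsub : ({k, k+1} : Finset ℕ) ⊆ range (N+1) := by
      intro j hj
      simp only [Finset.mem_insert, Finset.mem_singleton] at hj
      rcases hj with rfl | rfl <;> simp [Finset.mem_range] <;> omega
    have hzero : ∀ j ∈ range (N+1), j ∉ ({k, k+1} : Finset ℕ) →
        (f (node j)/Δ) * max 0 (Δ - |t - node j|) = 0 := by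
      intro j hjr hjn
      simp only [Finset.mem_insert, Finset.mem_singleton, not_or] at hjn
      have habs : Δ ≤ |t - node j| := by
        rcases Nat.lt_or_ge j k with hlt | hge
        · -- j < k : t - node j ≥ (k - j) Δ ≥ Δ
          have : node j + Δ ≤ node k := by
            simp only [hnodedef]
            have : (j:ℝ) + 1 ≤ k := by exact_mod_cast hlt
            nlinarith
          have h : Δ ≤ t - node j := by linarith
          calc Δ ≤ t - node j := h
            _ ≤ |t - node j| := le_abs_self _
        · have hj2 : k + 2 ≤ j := by omega
          have : node (k+1) + Δ ≤ node j := by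
            simp only [hnodedef]
            have : (k:ℝ) + 2 ≤ j := by exact_mod_cast hj2
            push_cast
            nlinarith
          have h : Δ ≤ node j - t := by linarith
          calc Δ ≤ node j - t := h
            _ ≤ |t - node j| := by rw [abs_sub_comm]; exact le_abs_self _
      have : max 0 (Δ - |t - node j|) = 0 := max_eq_left (by linarith)
      rw [this, mul_zero]
    have hsum : F t = ∑ j ∈ ({k, k+1} : Finset ℕ),
        (f (node j)/Δ) * max 0 (Δ - |t - node j|) :=
      (Finset.sum_subset hsub hzero).symm
    have hkne : k ≠ k + 1 := by omega
    rw [Finset.sum_pair hkne] at hsum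
    -- compute the two hat values
    have hA1 : 0 ≤ t - node k := by linarith
    have hA2 : t - node k ≤ Δ := by rw [hstep] at hnodek1; linarith
    have hhk : max 0 (Δ - |t - node k|) = Δ - (t - node k) := by
      rw [abs_of_nonneg hA1]; exact max_eq_right (by linarith)
    have hhk1 : max 0 (Δ - |t - node (k+1)|) = t - node k := by
      rw [hstep, show t - (node k + Δ) = -(node k + Δ - t) by ring, abs_neg,
        abs_of_nonneg (by linarith)]
      have : Δ - (node k + Δ - t) = t - node k := by ring
      rw [this]; exact max_eq_right hA1
    rw [hhk, hhk1] at hsum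
    -- closeness of f at nodes
    have hb1 : |f (node k) - f t| < η/2 := by
      have := hudc (node k) (hnode_mem k (by omega)) t ht ?_
      · rwa [Real.dist_eq] at this
      · rw [Real.dist_eq, abs_sub_comm, abs_of_nonneg hA1]; linarith
    have hb2 : |f (node (k+1)) - f t| < η/2 := by
      have := hudc (node (k+1)) (hnode_mem (k+1) hk1) t ht ?_
      · rwa [Real.dist_eq] at this
      · rw [Real.dist_eq, hstep, show node k + Δ - t = Δ - (t - node k) by ring,
          abs_of_nonneg (by linarith)]
        linarith
    have hexp : f t - F t = (f t - f (node k)) * ((Δ - (t - node k))/Δ)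
        + (f t - f (node (k+1))) * ((t - node k)/Δ) := by
      rw [hsum]
      field_simp
      ring
    rw [hexp]
    have hw1 : 0 ≤ (Δ - (t - node k))/Δ := div_nonneg (by linarith) hΔpos.le
    have hw2 : 0 ≤ (t - node k)/Δ := div_nonneg hA1 hΔpos.le
    have hwsum : (Δ - (t - node k))/Δ + (t - node k)/Δ = 1 := by field_simp; ring
    calc |(f t - f (node k)) * ((Δ - (t - node k))/Δ)
        + (f t - f (node (k+1))) * ((t - node k)/Δ)|
        ≤ |f t - f (node k)| * ((Δ - (t - node k))/Δ)
          + |f t - f (node (k+1))| * ((t - node k)/Δ) := by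
          refine (abs_add_le _ _).trans ?_
          rw [abs_mul, abs_mul, abs_of_nonneg hw1, abs_of_nonneg hw2]
      _ ≤ (η/2) * ((Δ - (t - node k))/Δ) + (η/2) * ((t - node k)/Δ) := by
          rw [abs_sub_comm (f t), abs_sub_comm (f t)]
          exact add_le_add (mul_le_mul_of_nonneg_right hb1.le hw1)
            (mul_le_mul_of_nonneg_right hb2.le hw2)
      _ = η/2 := by rw [← mul_add, hwsum, mul_one]
      _ < η := by linarith


lemma sig_oneD (σ : ℝ → ℝ) (hnc : ∃ a b, σ a ≠ σ b) (hbd : ∃ C, ∀ z, |σ z| ≤ C)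
    (hmono : Monotone σ)
    (f : ℝ → ℝ) (hf : Continuous f) (R η : ℝ) (hR : 0 < R) (hη : 0 < η) :
    ∃ F ∈ Submodule.span ℝ (ridge1 σ), ∀ t ∈ Set.Icc (-R) R, |f t - F t| < η := by
  classical
  obtain ⟨C, hC⟩ := hbd
  have hbdd : BddAbove (Set.range σ) := ⟨C, by rintro y ⟨z, rfl⟩; exact (abs_le.mp (hC z)).2⟩
  have hbdd' : BddBelow (Set.range σ) := ⟨-C, by rintro y ⟨z, rfl⟩; exact (abs_le.mp (hC z)).1⟩
  set Lp : ℝ := ⨆ z, σ z with hLp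
  set Lm : ℝ := ⨅ z, σ z with hLm
  have htop : Tendsto σ atTop (nhds Lp) := tendsto_atTop_ciSup hmono hbdd
  have hbot : Tendsto σ atBot (nhds Lm) := tendsto_atBot_ciInf hmono hbdd'
  have hσle : ∀ z, σ z ≤ Lp := fun z => le_ciSup hbdd z
  have hσge : ∀ z, Lm ≤ σ z := fun z => ciInf_le hbdd' z
  have hD : 0 < Lp - Lm := by
    obtain ⟨a, b, hab⟩ := hnc
    rcases le_total a b with h | h
    · have : σ a < σ b := lt_of_le_of_ne (hmono h) hab
      have := hσge a; have := hσle b; linarith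
    · have : σ b < σ a := lt_of_le_of_ne (hmono h) (Ne.symm hab)
      have := hσge b; have := hσle a; linarith
  set D : ℝ := Lp - Lm with hDdef
  set τ : ℝ → ℝ := fun u => (σ u - Lm) / D with hτdef
  have hτ01 : ∀ u, 0 ≤ τ u ∧ τ u ≤ 1 := by
    intro u
    constructor
    · exact div_nonneg (by linarith [hσge u]) hD.le
    · rw [div_le_one hD]; linarith [hσle u]
  -- nodes
  obtain ⟨δ, hδ, hudc⟩ := Metric.uniformContinuousOn_iff.mp
    ((isCompact_Icc (a := -R) (b := R)).uniformContinuousOn_of_continuous hf.continuousOn)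
    (η/4) (by linarith)
  set N : ℕ := ⌈2*R/δ⌉₊ + 1 with hNdef
  have hN : 0 < N := Nat.succ_pos _
  set Δ : ℝ := 2*R/N with hΔdef
  have hΔpos : 0 < Δ := by positivity
  have hΔδ : Δ < δ := by
    rw [hΔdef, div_lt_iff₀ (by positivity)]
    have h1 : 2*R/δ < N := by
      have h2 : (⌈2*R/δ⌉₊ : ℝ) < N := by exact_mod_cast Nat.lt_succ_self _
      nlinarith [Nat.le_ceil (2*R/δ)]
    have := (div_lt_iff₀ hδ).mp h1
    linarith
  set node : ℕ → ℝ := fun j => -R + j * Δ with hnodedef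
  have hnode_mem : ∀ j, j ≤ N → node j ∈ Set.Icc (-R) R := by
    intro j hj
    have hjc : (j:ℝ) ≤ N := Nat.cast_le.mpr hj
    constructor
    · simp only [hnodedef]
      nlinarith [hΔpos, Nat.cast_nonneg (α := ℝ) j]
    · have : (j:ℝ) * Δ ≤ N * Δ := by nlinarith [hjc, hΔpos]
      have hNΔ : (N:ℝ) * Δ = 2*R := by rw [hΔdef]; field_simp
      simp only [hnodedef]; nlinarith
  set d : ℕ → ℝ := fun j => f (node (j+1)) - f (node j) with hddef
  have hdbd : ∀ j, j < N → |d j| ≤ η/4 := by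
    intro j hj
    have h1 := hudc (node (j+1)) (hnode_mem (j+1) hj) (node j) (hnode_mem j hj.le) ?_
    · rw [Real.dist_eq] at h1; exact h1.le
    · rw [Real.dist_eq]
      have : node (j+1) - node j = Δ := by simp only [hnodedef]; push_cast; ring
      rw [this, abs_of_nonneg hΔpos.le]; exact hΔδ
  set mid : ℕ → ℝ := fun j => node j + Δ/2 with hmiddef
  -- choose η' and the slope λ
  set η' : ℝ := 1 / (N + 1) with hη'def
  have hη'pos : 0 < η' := by positivity
  have hgt : Lp - η' * D < Lp := by nlinarith
  have hlt : Lm < Lm + η' * D := by nlinarith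
  obtain ⟨u₀, hu₀⟩ := (Filter.eventually_atTop.mp (htop.eventually (eventually_gt_nhds hgt)))
  obtain ⟨u₁, hu₁⟩ := (Filter.eventually_atBot.mp (hbot.eventually (eventually_lt_nhds hlt)))
  set W : ℝ := max (max u₀ (-u₁)) 0 with hWdef
  set lam : ℝ := 2 * W / Δ with hlamdef
  have hlamnn : 0 ≤ lam := by
    have : (0:ℝ) ≤ W := le_max_right _ _
    positivity
  have hlamW : lam * (Δ/2) = W := by rw [hlamdef]; field_simp
  have hτhigh : ∀ v, Δ/2 ≤ v → 1 - η' ≤ τ (lam * v) := by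
    intro v hv
    have h1 : W ≤ lam * v := by
      rw [← hlamW]
      exact mul_le_mul_of_nonneg_left hv hlamnn
    have h2 : u₀ ≤ lam * v := le_trans (le_trans (le_max_left _ _) (le_max_left _ _)) h1
    have := hu₀ _ h2
    rw [hτdef]
    rw [le_div_iff₀ hD]
    nlinarith
  have hτlow : ∀ v, v ≤ -(Δ/2) → τ (lam * v) ≤ η' := by
    intro v hv
    have h1 : lam * v ≤ -W := by
      have : lam * v ≤ lam * (-(Δ/2)) := mul_le_mul_of_nonneg_left hv hlamnn
      have h2 : lam * (-(Δ/2)) = -W := by rw [← hlamW]; ring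
      linarith [h2 ▸ this]
    have h2 : lam * v ≤ u₁ := by
      have h3 : -u₁ ≤ W := le_trans (le_max_right u₀ (-u₁)) (le_max_left _ _)
      linarith
    have := hu₁ _ h2
    rw [hτdef, div_le_iff₀ hD]
    nlinarith
  -- the network
  set F : ℝ → ℝ := fun t => f (node 0)
      + ∑ j ∈ range N, (d j / D * σ (lam * (t - mid j)) - d j * Lm / D) with hFdef
  have hFτ : ∀ t, F t = f (node 0) + ∑ j ∈ range N, d j * τ (lam * (t - mid j)) := by
    intro t
    simp only [hFdef]
    congr 1
    apply Finset.sum_congr rfl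
    intro j _
    rw [hτdef]
    field_simp
  clear_value Lp Lm D τ N Δ node d mid η' W lam F
  refine ⟨F, ?_, ?_⟩
  · -- membership
    obtain ⟨a, b, hab⟩ := hnc
    have hz : σ a ≠ 0 ∨ σ b ≠ 0 := by
      by_contra h
      push_neg at h
      exact hab (h.1.trans h.2.symm)
    obtain ⟨z₀, hz₀⟩ : ∃ z₀, σ z₀ ≠ 0 := by rcases hz with h | h; exacts [⟨a, h⟩, ⟨b, h⟩]
    have : F = (fun _ : ℝ => f (node 0)) + ∑ j ∈ range N,
        ((d j / D) • (fun t => σ (lam * t + (-(lam * mid j)))) +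
          (fun _ : ℝ => -(d j * Lm / D))) := by
      funext t
      rw [hFdef]
      simp only [Pi.add_apply, Finset.sum_apply, Pi.smul_apply, smul_eq_mul]
      congr 1
      apply Finset.sum_congr rfl
      intro j _
      have : lam * (t - mid j) = lam * t + (-(lam * mid j)) := by ring
      rw [this]
      ring
    rw [this]
    refine Submodule.add_mem _ (const_mem_span σ z₀ hz₀ _) (Submodule.sum_mem _ ?_)
    intro j _
    exact Submodule.add_mem _
      (Submodule.smul_mem _ _ (Submodule.subset_span ⟨lam, -(lam * mid j), rfl⟩))
      (const_mem_span σ z₀ hz₀ _)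
  · -- error bound
    intro t ht
    obtain ⟨k, hk1, hk2, hk3⟩ := exists_node_interval R hR N hN t ht
    have hnodek : node k ≤ t := by simp only [hnodedef]; rw [hΔdef]; exact hk2
    have hnodek1 : t ≤ node (k+1) := by
      simp only [hnodedef]; push_cast; rw [hΔdef]; exact hk3
    have hfk : |f (node k) - f t| < η/4 := by
      have h1 := hudc (node k) (hnode_mem k (by omega)) t ht ?_
      · rwa [Real.dist_eq] at h1
      · rw [Real.dist_eq]
        have hstep : node (k+1) = node k + Δ := by
          simp only [hnodedef]; push_cast; ring
        rw [abs_sub_comm, abs_of_nonneg (by linarith)]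
        rw [hstep] at hnodek1; linarith
    -- telescoping
    have htel : f (node 0) + ∑ j ∈ range k, d j = f (node k) := by
      have := Finset.sum_range_sub (fun j => f (node j)) k
      simp only [hddef] at this ⊢
      rw [this]; ring
    have hkN : k < N := hk1
    have hsubk : range k ⊆ range N := Finset.range_subset_range.mpr hkN.le
    have hXsum : ∑ j ∈ range k, d j = ∑ j ∈ range N, d j * (if j < k then 1 else 0) := by
      rw [← Finset.sum_subset hsubk]
      · apply Finset.sum_congr rfl
        intro j hj
        rw [Finset.mem_range] at hj
        simp [hj]
      · intro j _ hj
        rw [Finset.mem_range] at hj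
        simp [hj]
    have hdecomp : F t - f t = (f (node k) - f t)
        + ∑ j ∈ range N, d j * (τ (lam * (t - mid j)) - (if j < k then 1 else 0)) := by
      have hsplit : ∑ j ∈ range N, d j * τ (lam * (t - mid j))
          = ∑ j ∈ range N, (d j * (if j < k then 1 else 0)
            + d j * (τ (lam * (t - mid j)) - (if j < k then 1 else 0))) := by
        apply Finset.sum_congr rfl
        intro j _
        ring
      rw [hFτ t, hsplit, Finset.sum_add_distrib, ← hXsum]
      linarith [htel]
    -- per-term bounds
    have hterm : ∀ j ∈ range N, |d j * (τ (lam * (t - mid j)) - (if j < k then 1 else 0))|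
        ≤ η/4 * η' + (if j = k then η/4 else 0) := by
      intro j hj
      rw [Finset.mem_range] at hj
      have hdj := hdbd j hj
      rcases lt_trichotomy j k with hlt | rfl | hgt
      · -- j < k : t - mid j ≥ Δ/2
        have hmidle : mid j + Δ/2 ≤ t := by
          have : node (j+1) ≤ node k := by
            simp only [hnodedef]
            have : (j:ℝ) + 1 ≤ k := by exact_mod_cast hlt
            push_cast
            nlinarith
          simp only [hmiddef]
          have hstep : node (j+1) = node j + Δ := by
            simp only [hnodedef]; push_cast; ring
          rw [hstep] at this
          linarith
        have h1 := hτhigh (t - mid j) (by linarith)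
        have h2 := (hτ01 (lam * (t - mid j))).2
        simp only [if_pos hlt, if_neg (by omega : ¬ j = k)]
        rw [abs_mul]
        have : |τ (lam * (t - mid j)) - 1| ≤ η' := by rw [abs_le]; constructor <;> linarith
        calc |d j| * |τ (lam * (t - mid j)) - 1| ≤ (η/4) * η' :=
              mul_le_mul hdj this (abs_nonneg _) (by linarith)
          _ ≤ η/4 * η' + 0 := by linarith
      · -- j = k : crude bound
        rw [if_neg (lt_irrefl j), if_pos rfl, sub_zero, abs_mul]
        have h1 := (hτ01 (lam * (t - mid j))).1
        have h2 := (hτ01 (lam * (t - mid j))).2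
        have : |τ (lam * (t - mid j))| ≤ 1 := by rw [abs_le]; constructor <;> linarith
        calc |d j| * |τ (lam * (t - mid j))| ≤ (η/4) * 1 :=
              mul_le_mul hdj this (abs_nonneg _) (by linarith)
          _ = η/4 := by ring
          _ ≤ η/4 * η' + η/4 := by nlinarith [hη'pos, hη]
      · -- j > k : t - mid j ≤ -Δ/2
        have hmidge : t ≤ mid j - Δ/2 := by
          have : node (k+1) ≤ node j := by
            simp only [hnodedef]
            have : (k:ℝ) + 1 ≤ j := by exact_mod_cast hgt
            push_cast
            nlinarith
          simp only [hmiddef]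
          linarith
        have h1 := hτlow (t - mid j) (by linarith)
        have h2 := (hτ01 (lam * (t - mid j))).1
        simp only [if_neg (by omega : ¬ j < k), if_neg (by omega : ¬ j = k)]
        rw [abs_mul, sub_zero]
        have : |τ (lam * (t - mid j))| ≤ η' := by rw [abs_le]; constructor <;> linarith
        calc |d j| * |τ (lam * (t - mid j))| ≤ (η/4) * η' :=
              mul_le_mul hdj this (abs_nonneg _) (by linarith)
          _ ≤ η/4 * η' + 0 := by linarith
    have hsumbd : |∑ j ∈ range N, d j * (τ (lam * (t - mid j)) - (if j < k then 1 else 0))|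
        ≤ η/4 + η/4 := by
      calc |∑ j ∈ range N, d j * (τ (lam * (t - mid j)) - (if j < k then 1 else 0))|
          ≤ ∑ j ∈ range N, |d j * (τ (lam * (t - mid j)) - (if j < k then 1 else 0))| :=
            Finset.abs_sum_le_sum_abs _ _
        _ ≤ ∑ j ∈ range N, (η/4 * η' + (if j = k then η/4 else 0)) :=
            Finset.sum_le_sum hterm
        _ = N * (η/4 * η') + η/4 := by
            rw [Finset.sum_add_distrib, Finset.sum_const, Finset.sum_ite_eq' (range N) k]
            simp [Finset.mem_range.mpr hkN]
        _ ≤ η/4 + η/4 := by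
            have : (N:ℝ) * η' ≤ 1 := by
              rw [hη'def]
              rw [mul_one_div, div_le_one (by positivity)]
              linarith
            nlinarith
    have := abs_sub_abs_le_abs_sub (F t) (f t)
    have habs : |f t - F t| ≤ |f (node k) - f t| + (η/4 + η/4) := by
      rw [abs_sub_comm, hdecomp]
      exact (abs_add_le _ _).trans (by linarith)
    linarith


lemma oneD (σ : ℝ → ℝ)
    (hσ : (σ = fun z => max 0 z) ∨
      ((∃ a b, σ a ≠ σ b) ∧ Continuous σ ∧ (∃ C, ∀ z, |σ z| ≤ C) ∧ Monotone σ))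
    (f : ℝ → ℝ) (hf : Continuous f) (R η : ℝ) (hR : 0 < R) (hη : 0 < η) :
    ∃ F ∈ Submodule.span ℝ (ridge1 σ), ∀ t ∈ Set.Icc (-R) R, |f t - F t| < η := by
  rcases hσ with h | ⟨hnc, hcont, hbd, hmono⟩
  · exact relu_oneD σ h f hf R η hR hη
  · exact sig_oneD σ hnc hbd hmono f hf R η hR hη


lemma cube_compact (p : ℕ) (M : ℝ) : IsCompact (cube p M) := by
  have : cube p M = Set.pi Set.univ (fun _ : Fin p => Set.Icc (-M) M) := by
    ext x
    simp only [cube, Set.mem_setOf_eq, Set.mem_univ_pi, Set.mem_Icc, abs_le]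
  rw [this]
  exact isCompact_univ_pi fun _ => isCompact_Icc


lemma ridge_comp (σ : ℝ → ℝ) (p : ℕ) (w : Fin p → ℝ) {F : ℝ → ℝ}
    (hF : F ∈ Submodule.span ℝ (ridge1 σ)) :
    (fun x : Fin p → ℝ => F (∑ j, w j * x j)) ∈ Submodule.span ℝ (ridgeP σ p) := by
  induction hF using Submodule.span_induction with
  | mem φ hφ =>
    obtain ⟨b, c, rfl⟩ := hφ
    refine Submodule.subset_span ⟨fun j => b * w j, c, ?_⟩
    funext x
    show σ (b * (∑ j, w j * x j) + c) = σ ((∑ j, b * w j * x j) + c)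
    congr 1
    rw [Finset.mul_sum]
    congr 1
    exact Finset.sum_congr rfl fun j _ => by ring
  | zero => exact Submodule.zero_mem _
  | add F G hFm hGm ihF ihG => exact Submodule.add_mem _ ihF ihG
  | smul r F hFm ih => exact Submodule.smul_mem _ r ih


lemma multiD (p : ℕ) (M : ℝ) (hM : 0 < M) (σ : ℝ → ℝ)
    (hσ : (σ = fun z => max 0 z) ∨
      ((∃ a b, σ a ≠ σ b) ∧ Continuous σ ∧ (∃ C, ∀ z, |σ z| ≤ C) ∧ Monotone σ))
    (h : (Fin p → ℝ) → ℝ) (hh : ContinuousOn h (cube p M)) (η : ℝ) (hη : 0 < η) :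
    ∃ F ∈ Submodule.span ℝ (ridgeP σ p), ∀ x ∈ cube p M, |h x - F x| < η := by
  haveI : CompactSpace (cube p M) := isCompact_iff_compactSpace.mp (cube_compact p M)
  -- the exponential ridge functions as continuous maps on the cube
  have hexpcont : ∀ a : Fin p → ℝ,
      Continuous fun x : cube p M => Real.exp (∑ j, a j * (x : Fin p → ℝ) j) :=
    fun a => Real.continuous_exp.comp (continuous_finset_sum _ fun j _ =>
      continuous_const.mul ((continuous_apply j).comp continuous_subtype_val))
  set expMap : (Fin p → ℝ) → C(cube p M, ℝ) :=
    fun a => ⟨fun x => Real.exp (∑ j, a j * (x : Fin p → ℝ) j), hexpcont a⟩ with hexpMap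
  set Emon : Submonoid C(cube p M, ℝ) :=
    { carrier := Set.range expMap
      one_mem' := ⟨0, by ext x; simp [hexpMap]⟩
      mul_mem' := by
        rintro _ _ ⟨a, rfl⟩ ⟨b, rfl⟩
        refine ⟨a + b, ?_⟩
        ext x
        simp only [hexpMap, ContinuousMap.coe_mk, ContinuousMap.mul_apply, ← Real.exp_add,
          ← Finset.sum_add_distrib]
        congr 1
        exact Finset.sum_congr rfl fun j _ => by simp [Pi.add_apply]; ring } with hEmon
  set A : Subalgebra ℝ C(cube p M, ℝ) := Algebra.adjoin ℝ (Set.range expMap) with hA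
  have hsep : A.SeparatesPoints := by
    intro x y hxy
    obtain ⟨i, hi⟩ : ∃ i, (x : Fin p → ℝ) i ≠ (y : Fin p → ℝ) i := by
      by_contra hc
      push_neg at hc
      exact hxy (Subtype.ext (funext hc))
    refine ⟨(expMap (Pi.single i 1) : C(cube p M, ℝ)),
      ⟨expMap (Pi.single i 1), Algebra.subset_adjoin ⟨Pi.single i 1, rfl⟩, rfl⟩, ?_⟩
    have hval : ∀ z : cube p M, expMap (Pi.single i 1) z = Real.exp ((z : Fin p → ℝ) i) := by
      intro z
      simp only [hexpMap, ContinuousMap.coe_mk]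
      congr 1
      rw [Finset.sum_eq_single i]
      · simp
      · intro j _ hj; simp [Pi.single_apply, hj]
      · simp
    rw [hval x, hval y]
    exact fun hcontr => hi (Real.exp_injective hcontr)
  obtain ⟨Fc, hFc⟩ := ContinuousMap.exists_mem_subalgebra_near_continuous_of_separatesPoints
    A hsep ((cube p M).restrict h) (hh.restrict) (η/2) (by linarith)
  obtain ⟨G, hGmem⟩ := Fc
  have hFc' : ∀ x : cube p M, |G x - h x| < η/2 := by
    intro x
    have h1 := hFc x
    rw [Real.norm_eq_abs] at h1
    exact h1
  have hFcmem : G ∈ Submodule.span ℝ (Set.range expMap) := by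
    rw [hA] at hGmem
    have h3 : Submonoid.closure (Set.range expMap) = Emon := Submonoid.closure_eq Emon
    have h4 : G ∈ Subalgebra.toSubmodule (Algebra.adjoin ℝ (Set.range expMap)) :=
      (Subalgebra.mem_toSubmodule _).mpr hGmem
    rw [Algebra.adjoin_eq_span, h3] at h4
    exact h4
  -- every element of the span of exponentials is approximable by ridge functions
  have hkey : ∀ Ψ : C(cube p M, ℝ), Ψ ∈ Submodule.span ℝ (Set.range expMap) →
      ∀ θ : ℝ, 0 < θ → ∃ F ∈ Submodule.span ℝ (ridgeP σ p),
        ∀ x (hx : x ∈ cube p M), |Ψ ⟨x, hx⟩ - F x| < θ := by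
    intro Ψ hΨ
    induction hΨ using Submodule.span_induction with
    | mem φ hφ =>
      obtain ⟨a, rfl⟩ := hφ
      intro θ hθ
      set R : ℝ := M * (∑ j, |a j|) + 1 with hR
      have hRpos : 0 < R := by
        have : 0 ≤ ∑ j, |a j| := Finset.sum_nonneg fun j _ => abs_nonneg _
        nlinarith
      obtain ⟨F1, hF1mem, hF1⟩ := oneD σ hσ Real.exp Real.continuous_exp R θ hRpos hθ
      refine ⟨fun x => F1 (∑ j, a j * x j), ridge_comp σ p a hF1mem, ?_⟩
      intro x hx
      have hmem : (∑ j, a j * x j) ∈ Set.Icc (-R) R := by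
        have habs : |∑ j, a j * x j| ≤ M * (∑ j, |a j|) := by
          calc |∑ j, a j * x j| ≤ ∑ j, |a j * x j| := Finset.abs_sum_le_sum_abs _ _
            _ ≤ ∑ j, |a j| * M := by
                apply Finset.sum_le_sum
                intro j _
                rw [abs_mul]
                exact mul_le_mul_of_nonneg_left (hx j) (abs_nonneg _)
            _ = M * (∑ j, |a j|) := by rw [← Finset.sum_mul]; ring
        have h5 : |∑ j, a j * x j| ≤ R := by rw [hR]; linarith
        exact Set.mem_Icc.mpr (abs_le.mp h5)
      exact hF1 _ hmem
    | zero =>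
      intro θ hθ
      exact ⟨0, Submodule.zero_mem _, fun x hx => by simpa using hθ⟩
    | add Ψ₁ Ψ₂ h₁ h₂ ih₁ ih₂ =>
      intro θ hθ
      obtain ⟨F1, hF1m, hF1⟩ := ih₁ (θ/2) (by linarith)
      obtain ⟨F2, hF2m, hF2⟩ := ih₂ (θ/2) (by linarith)
      refine ⟨F1 + F2, Submodule.add_mem _ hF1m hF2m, ?_⟩
      intro x hx
      have := abs_add_le (Ψ₁ ⟨x, hx⟩ - F1 x) (Ψ₂ ⟨x, hx⟩ - F2 x)
      have e : Ψ₁ ⟨x, hx⟩ - F1 x + (Ψ₂ ⟨x, hx⟩ - F2 x)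
          = (Ψ₁ + Ψ₂) ⟨x, hx⟩ - (F1 + F2) x := by
        simp only [ContinuousMap.add_apply, Pi.add_apply]; ring
      rw [e] at this
      calc |(Ψ₁ + Ψ₂) ⟨x, hx⟩ - (F1 + F2) x| ≤ _ := this
        _ < θ/2 + θ/2 := add_lt_add (hF1 x hx) (hF2 x hx)
        _ = θ := by ring
    | smul r Ψ hm ih =>
      intro θ hθ
      obtain ⟨F1, hF1m, hF1⟩ := ih (θ/(|r|+1)) (by positivity)
      refine ⟨r • F1, Submodule.smul_mem _ r hF1m, ?_⟩
      intro x hx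
      have e : (r • Ψ) ⟨x, hx⟩ - (r • F1) x = r * (Ψ ⟨x, hx⟩ - F1 x) := by
        simp only [ContinuousMap.smul_apply, Pi.smul_apply, smul_eq_mul]; ring
      rw [e, abs_mul]
      have hb := hF1 x hx
      have h1 : |r| * |Ψ ⟨x, hx⟩ - F1 x| ≤ |r| * (θ/(|r|+1)) :=
        mul_le_mul_of_nonneg_left hb.le (abs_nonneg _)
      have h2 : |r| * (θ/(|r|+1)) < θ := by
        rw [mul_div_assoc'] at *
        rw [div_lt_iff₀ (by positivity)]
        nlinarith [abs_nonneg r]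
      linarith
  obtain ⟨F, hFm, hF⟩ := hkey _ hFcmem (η/2) (by linarith)
  refine ⟨F, hFm, ?_⟩
  intro x hx
  have h1 := hFc' ⟨x, hx⟩
  have h2 := hF x hx
  have h3 : |h x - F x| ≤ |G ⟨x, hx⟩ - h x| + |G ⟨x, hx⟩ - F x| := by
    calc |h x - F x| = |((G ⟨x, hx⟩ - h x) * (-1)) + (G ⟨x, hx⟩ - F x)| := by ring_nf
      _ ≤ |(G ⟨x, hx⟩ - h x) * (-1)| + |G ⟨x, hx⟩ - F x| := abs_add_le _ _
      _ = |G ⟨x, hx⟩ - h x| + |G ⟨x, hx⟩ - F x| := by rw [abs_mul]; simp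
  linarith


lemma netform (σ : ℝ → ℝ) (p : ℕ) {F : (Fin p → ℝ) → ℝ}
    (hF : F ∈ Submodule.span ℝ (ridgeP σ p)) :
    ∃ (m : ℕ) (a : Fin m → ℝ) (B : Fin m → Fin p → ℝ) (c : Fin m → ℝ),
      ∀ x, F x = ∑ i, a i * σ ((∑ j, B i j * x j) + c i) := by
  induction hF using Submodule.span_induction with
  | mem φ hφ =>
    obtain ⟨w, cc, rfl⟩ := hφ
    exact ⟨1, fun _ => 1, fun _ => w, fun _ => cc, fun x => by simp⟩
  | zero => exact ⟨0, Fin.elim0, Fin.elim0, Fin.elim0, fun x => by simp⟩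
  | add F G hFmem hGmem ihF ihG =>
    obtain ⟨m1, a1, B1, c1, h1⟩ := ihF
    obtain ⟨m2, a2, B2, c2, h2⟩ := ihG
    refine ⟨m1 + m2, Fin.append a1 a2, Fin.append B1 B2, Fin.append c1 c2, fun x => ?_⟩
    rw [Pi.add_apply, h1, h2, Fin.sum_univ_add]
    congr 1 <;> exact Finset.sum_congr rfl fun i _ => by
      simp [Fin.append_left, Fin.append_right]
  | smul r F hFmem ih =>
    obtain ⟨m, a, B, c, h1⟩ := ih
    refine ⟨m, fun i => r * a i, B, c, fun x => ?_⟩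
    rw [Pi.smul_apply, h1, smul_eq_mul, Finset.mul_sum]
    exact Finset.sum_congr rfl fun i _ => by ring


lemma feature_map (Kstar : ℕ) (Y : Set (EuclideanSpace ℝ (Fin Kstar))) (hY : IsCompact Y)
    (g : EuclideanSpace ℝ (Fin Kstar) → EuclideanSpace ℝ (Fin Kstar) → ℝ)
    (hg_symm : ∀ y ∈ Y, ∀ y' ∈ Y, g y y' = g y' y)
    (hg_cont : ContinuousOn (fun yy : EuclideanSpace ℝ (Fin Kstar) × EuclideanSpace ℝ (Fin Kstar) =>
      g yy.1 yy.2) (Y ×ˢ Y))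
    (hg_pd : ∀ (n : ℕ) (c : Fin n → ℝ) (y : Fin n → EuclideanSpace ℝ (Fin Kstar)),
      (∀ i, y i ∈ Y) → 0 ≤ ∑ i, ∑ j, c i * c j * g (y i) (y j))
    (ε : ℝ) (hε : 0 < ε) :
    ∃ (n : ℕ) (φ : Fin n → EuclideanSpace ℝ (Fin Kstar) → ℝ) (Cb : ℝ),
      (∀ k, ContinuousOn (φ k) Y) ∧ 0 ≤ Cb ∧ (∀ k, ∀ y ∈ Y, |φ k y| ≤ Cb) ∧
      (∀ y ∈ Y, ∀ y' ∈ Y, |g y y' - ∑ k, φ k y * φ k y'| ≤ ε) := by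
  classical
  -- uniform continuity of g on the compact set Y ×ˢ Y
  obtain ⟨δ, hδ, hudc⟩ := Metric.uniformContinuousOn_iff.mp
    ((hY.prod hY).uniformContinuousOn_of_continuous hg_cont) ε hε
  -- finite subcover by δ/2-balls
  obtain ⟨t, ht⟩ := hY.elim_finite_subcover (fun i : Y => Metric.ball (i : EuclideanSpace ℝ (Fin Kstar)) (δ/2))
    (fun i => Metric.isOpen_ball)
    (fun y hy => Set.mem_iUnion.mpr ⟨⟨y, hy⟩, Metric.mem_ball_self (by linarith)⟩)
  set n : ℕ := t.card with hncard
  set e := t.equivFin with he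
  set ys : Fin n → EuclideanSpace ℝ (Fin Kstar) := fun k => ((e.symm k : t) : Y) with hys
  have hysY : ∀ k, ys k ∈ Y := fun k => ((e.symm k : t) : Y).2
  have hcover : ∀ y ∈ Y, ∃ k, dist y (ys k) < δ/2 := by
    intro y hy
    have := ht hy
    rw [Set.mem_iUnion₂] at this
    obtain ⟨i, hi, hball⟩ := this
    refine ⟨e ⟨i, hi⟩, ?_⟩
    have : ys (e ⟨i, hi⟩) = (i : EuclideanSpace ℝ (Fin Kstar)) := by
      rw [hys]; simp
    rw [this]
    exact Metric.mem_ball.mp hball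
  -- partition of unity
  set ρt : Fin n → EuclideanSpace ℝ (Fin Kstar) → ℝ :=
    fun k y => max 0 (δ/2 - dist y (ys k)) with hρt
  have hρt_nonneg : ∀ k y, 0 ≤ ρt k y := fun k y => le_max_left _ _
  have hρt_cont : ∀ k, Continuous (ρt k) :=
    fun k => continuous_const.max (continuous_const.sub (continuous_id.dist continuous_const))
  set S : EuclideanSpace ℝ (Fin Kstar) → ℝ := fun y => ∑ k, ρt k y with hS
  have hS_cont : Continuous S := continuous_finset_sum _ fun k _ => hρt_cont k
  have hS_pos : ∀ y ∈ Y, 0 < S y := by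
    intro y hy
    obtain ⟨k, hk⟩ := hcover y hy
    exact Finset.sum_pos' (fun i _ => hρt_nonneg i y)
      ⟨k, Finset.mem_univ k, lt_max_iff.mpr (Or.inr (by linarith))⟩
  set ρ : Fin n → EuclideanSpace ℝ (Fin Kstar) → ℝ := fun k y => ρt k y / S y with hρ
  have hρ_nonneg : ∀ k, ∀ y ∈ Y, 0 ≤ ρ k y := fun k y hy =>
    div_nonneg (hρt_nonneg k y) (hS_pos y hy).le
  have hρ_le_one : ∀ k, ∀ y ∈ Y, ρ k y ≤ 1 := by
    intro k y hy
    rw [hρ, div_le_one (hS_pos y hy)]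
    exact Finset.single_le_sum (fun i (_ : i ∈ Finset.univ) => hρt_nonneg i y) (Finset.mem_univ k)
  have hρ_sum : ∀ y ∈ Y, ∑ k, ρ k y = 1 := by
    intro y hy
    rw [hρ]
    rw [← Finset.sum_div]
    exact div_self (hS_pos y hy).ne'
  have hρ_cont : ∀ k, ContinuousOn (ρ k) Y := by
    intro k
    exact ((hρt_cont k).continuousOn).div (hS_cont.continuousOn)
      (fun y hy => (hS_pos y hy).ne')
  have hρ_near : ∀ k y, ρ k y ≠ 0 → dist y (ys k) < δ/2 := by
    intro k y hne
    by_contra hge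
    push_neg at hge
    apply hne
    rw [hρ, hρt]
    simp only [max_eq_left (by linarith : δ/2 - dist y (ys k) ≤ 0)]
    simp
  -- the Gram matrix and its square root
  set G : Matrix (Fin n) (Fin n) ℝ := Matrix.of (fun i j => g (ys i) (ys j)) with hG
  have hGpsd : G.PosSemidef := by
    refine Matrix.PosSemidef.of_dotProduct_mulVec_nonneg ?_ ?_
    · ext i j
      simp only [Matrix.conjTranspose_apply, hG, Matrix.of_apply, star_trivial]
      exact hg_symm (ys j) (hysY j) (ys i) (hysY i)
    · intro x
      have h1 : dotProduct (star x) (G.mulVec x) = ∑ i, ∑ j, x i * x j * g (ys i) (ys j) := by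
        simp only [star_trivial, dotProduct, Matrix.mulVec, hG, Matrix.of_apply]
        apply Finset.sum_congr rfl
        intro i _
        rw [Finset.mul_sum]
        exact Finset.sum_congr rfl fun j _ => by ring
      rw [h1]
      exact hg_pd n x ys hysY
  obtain ⟨L, hL⟩ : ∃ L : Matrix (Fin n) (Fin n) ℝ, G = Lᴴ * L := by
    open scoped MatrixOrder in
    exact CStarAlgebra.nonneg_iff_eq_star_mul_self.mp (Matrix.nonneg_iff_posSemidef.mpr hGpsd)
  have hGentry : ∀ i j, G i j = ∑ k, L k i * L k j := by
    intro i j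
    rw [hL, Matrix.mul_apply]
    exact Finset.sum_congr rfl fun k _ => by
      simp [Matrix.conjTranspose_apply, star_trivial]
  -- the feature map
  set φ : Fin n → EuclideanSpace ℝ (Fin Kstar) → ℝ :=
    fun k y => ∑ i, L k i * ρ i y with hφ
  set Cb : ℝ := ∑ k, ∑ i, |L k i| with hCb
  have hCb_nonneg : 0 ≤ Cb := Finset.sum_nonneg fun k _ =>
    Finset.sum_nonneg fun i _ => abs_nonneg _
  clear_value ρt S ρ G φ Cb
  refine ⟨n, φ, Cb, ?_, hCb_nonneg, ?_, ?_⟩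
  · -- continuity
    intro k
    rw [hφ]
    exact continuousOn_finset_sum _ fun i _ => (continuousOn_const.mul (hρ_cont i))
  · -- boundedness
    intro k y hy
    rw [hφ]
    calc |∑ i, L k i * ρ i y| ≤ ∑ i, |L k i * ρ i y| := Finset.abs_sum_le_sum_abs _ _
      _ ≤ ∑ i, |L k i| := by
          apply Finset.sum_le_sum
          intro i _
          rw [abs_mul, abs_of_nonneg (hρ_nonneg i y hy)]
          nlinarith [abs_nonneg (L k i), hρ_le_one i y hy, hρ_nonneg i y hy]
      _ ≤ Cb := by
          rw [hCb]
          exact Finset.single_le_sum (f := fun k => ∑ i, |L k i|)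
            (fun k _ => Finset.sum_nonneg fun i _ => abs_nonneg _) (Finset.mem_univ k)
  · -- the approximation property
    intro y hy y' hy'
    have hexpand : ∑ k, φ k y * φ k y' = ∑ i, ∑ j, ρ i y * ρ j y' * G i j := by
      calc ∑ k, φ k y * φ k y'
          = ∑ k, ∑ i, ∑ j, (L k i * ρ i y) * (L k j * ρ j y') := by
            apply Finset.sum_congr rfl
            intro k _
            rw [hφ]
            rw [Finset.sum_mul_sum]
        _ = ∑ i, ∑ k, ∑ j, (L k i * ρ i y) * (L k j * ρ j y') := Finset.sum_comm
        _ = ∑ i, ∑ j, ∑ k, (L k i * ρ i y) * (L k j * ρ j y') := by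
            exact Finset.sum_congr rfl fun i _ => Finset.sum_comm
        _ = ∑ i, ∑ j, ρ i y * ρ j y' * G i j := by
            apply Finset.sum_congr rfl
            intro i _
            apply Finset.sum_congr rfl
            intro j _
            rw [hGentry i j, Finset.mul_sum]
            exact Finset.sum_congr rfl fun k _ => by ring
    have hinner : ∀ c : ℝ, ∑ j, (c * ρ j y') = c := by
      intro c
      rw [← Finset.mul_sum, hρ_sum y' hy', mul_one]
    have hout : ∀ c : ℝ, ∑ i, (c * ρ i y) = c := by
      intro c
      rw [← Finset.mul_sum, hρ_sum y hy, mul_one]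
    have hdouble : ∀ c : ℝ, ∑ i, ∑ j, ρ i y * ρ j y' * c = c := by
      intro c
      calc ∑ i, ∑ j, ρ i y * ρ j y' * c
          = ∑ i, (c * ρ i y) := by
            apply Finset.sum_congr rfl
            intro i _
            calc ∑ j, ρ i y * ρ j y' * c = ∑ j, ((c * ρ i y) * ρ j y') :=
                Finset.sum_congr rfl fun j _ => by ring
              _ = c * ρ i y := hinner _
        _ = c := hout _
    have hsplit : ∑ i, ∑ j, ρ i y * ρ j y' * (g y y' - G i j)
        = (∑ i, ∑ j, ρ i y * ρ j y' * g y y') - ∑ i, ∑ j, ρ i y * ρ j y' * G i j := by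
      rw [← Finset.sum_sub_distrib]
      apply Finset.sum_congr rfl
      intro i _
      rw [← Finset.sum_sub_distrib]
      exact Finset.sum_congr rfl fun j _ => by ring
    rw [hexpand]
    have hdiff : g y y' - ∑ i, ∑ j, ρ i y * ρ j y' * G i j
        = ∑ i, ∑ j, ρ i y * ρ j y' * (g y y' - G i j) := by
      rw [hsplit, hdouble]
    rw [hdiff]
    -- per-term bound
    have hterm : ∀ i j, |ρ i y * ρ j y' * (g y y' - G i j)| ≤ ρ i y * ρ j y' * ε := by
      intro i j
      rcases eq_or_ne (ρ i y) 0 with hz | hz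
      · rw [hz]; simp
      rcases eq_or_ne (ρ j y') 0 with hz' | hz'
      · rw [hz']; simp
      have hd1 := hρ_near i y hz
      have hd2 := hρ_near j y' hz'
      have hdist : dist ((y, y') : EuclideanSpace ℝ (Fin Kstar) × EuclideanSpace ℝ (Fin Kstar))
          (ys i, ys j) < δ := by
        rw [Prod.dist_eq]
        exact max_lt (by linarith) (by linarith)
      have := hudc (y, y') (Set.mk_mem_prod hy hy') (ys i, ys j)
        (Set.mk_mem_prod (hysY i) (hysY j)) hdist
      rw [Real.dist_eq] at this
      rw [abs_mul, abs_mul]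
      rw [abs_of_nonneg (hρ_nonneg i y hy), abs_of_nonneg (hρ_nonneg j y' hy')]
      have h2 : |g y y' - G i j| ≤ ε := by
        rw [hG]; exact this.le
      have h3 : 0 ≤ ρ i y * ρ j y' := mul_nonneg (hρ_nonneg i y hy) (hρ_nonneg j y' hy')
      exact mul_le_mul_of_nonneg_left h2 h3
    calc |∑ i, ∑ j, ρ i y * ρ j y' * (g y y' - G i j)|
        ≤ ∑ i, |∑ j, ρ i y * ρ j y' * (g y y' - G i j)| := Finset.abs_sum_le_sum_abs _ _
      _ ≤ ∑ i, ∑ j, |ρ i y * ρ j y' * (g y y' - G i j)| :=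
          Finset.sum_le_sum fun i _ => Finset.abs_sum_le_sum_abs _ _
      _ ≤ ∑ i, ∑ j, ρ i y * ρ j y' * ε :=
          Finset.sum_le_sum fun i _ => Finset.sum_le_sum fun j _ => hterm i j
      _ = ε := hdouble ε


lemma netpad (σ : ℝ → ℝ) (p m m' : ℕ) (hm : m ≤ m') (a : Fin m → ℝ)
    (B : Fin m → Fin p → ℝ) (c : Fin m → ℝ) :
    ∃ (a' : Fin m' → ℝ) (B' : Fin m' → Fin p → ℝ) (c' : Fin m' → ℝ),
      ∀ x : Fin p → ℝ,
        ∑ i, a' i * σ ((∑ j, B' i j * x j) + c' i)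
          = ∑ i, a i * σ ((∑ j, B i j * x j) + c i) := by
  classical
  refine ⟨fun i => if h : (i : ℕ) < m then a ⟨i, h⟩ else 0,
    fun i => if h : (i : ℕ) < m then B ⟨i, h⟩ else 0,
    fun i => if h : (i : ℕ) < m then c ⟨i, h⟩ else 0, fun x => ?_⟩
  rw [← Finset.sum_subset (Finset.subset_univ
    ((Finset.univ : Finset (Fin m)).map (Fin.castLEEmb hm)))]
  · rw [Finset.sum_map]
    apply Finset.sum_congr rfl
    intro i _
    have hlt : ((Fin.castLEEmb hm i : Fin m') : ℕ) < m := i.isLt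
    simp only [Fin.castLEEmb_apply, Fin.coe_castLE, dif_pos i.isLt, Fin.eta]
  · intro i _ hi
    have hge : ¬ ((i : ℕ) < m) := by
      intro hlt
      apply hi
      rw [Finset.mem_map]
      exact ⟨⟨(i : ℕ), hlt⟩, Finset.mem_univ _, by
        simp [Fin.castLEEmb_apply, Fin.castLE, Fin.ext_iff]⟩
    simp only [dif_neg hge]
    rw [zero_mul]

end IPS

/-- Approximation theorem for the inner-product similarity (IPS) model:
for a continuous `f* : [-M,M]ᵖ → Y` into a compact `Y ⊆ ℝ^{K*}` and a positive definite
kernel `g* : Y × Y → ℝ`, and an activation `σ` which is either ReLU or non-constant,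
continuous, bounded and monotone increasing, for every `ε > 0` there is a one-hidden-layer
neural network `f_NN(x) = A σ(Bx + c)` such that
`|g*(f*(x), f*(x')) - ⟨f_NN(x), f_NN(x')⟩| < ε` on the cube. -/
theorem approximation_theorem_for_IPS
    (p Kstar : ℕ) (M : ℝ) (hM : 0 < M)
    (Y : Set (EuclideanSpace ℝ (Fin Kstar))) (hY : IsCompact Y)
    (fstar : (Fin p → ℝ) → EuclideanSpace ℝ (Fin Kstar))
    (hfstar_cont : ContinuousOn fstar {x : Fin p → ℝ | ∀ i, |x i| ≤ M})
    (hfstar_maps : ∀ x ∈ {x : Fin p → ℝ | ∀ i, |x i| ≤ M}, fstar x ∈ Y)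
    (g : EuclideanSpace ℝ (Fin Kstar) → EuclideanSpace ℝ (Fin Kstar) → ℝ)
    (hg_symm : ∀ y ∈ Y, ∀ y' ∈ Y, g y y' = g y' y)
    (hg_cont : ContinuousOn (fun yy : EuclideanSpace ℝ (Fin Kstar) × EuclideanSpace ℝ (Fin Kstar) =>
      g yy.1 yy.2) (Y ×ˢ Y))
    (hg_pd : ∀ (n : ℕ) (c : Fin n → ℝ) (y : Fin n → EuclideanSpace ℝ (Fin Kstar)),
      (∀ i, y i ∈ Y) → 0 ≤ ∑ i, ∑ j, c i * c j * g (y i) (y j))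
    (σ : ℝ → ℝ)
    (hσ : (σ = fun z => max 0 z) ∨
      ((∃ a b, σ a ≠ σ b) ∧ Continuous σ ∧ (∃ C, ∀ z, |σ z| ≤ C) ∧ Monotone σ)) :
    ∀ ε > (0 : ℝ), ∃ (K m : ℕ) (A : Matrix (Fin K) (Fin m) ℝ)
      (B : Matrix (Fin m) (Fin p) ℝ) (c : Fin m → ℝ),
      ∀ x ∈ {x : Fin p → ℝ | ∀ i, |x i| ≤ M}, ∀ x' ∈ {x : Fin p → ℝ | ∀ i, |x i| ≤ M},
        |g (fstar x) (fstar x')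
          - dotProduct
              (A.mulVec fun i => σ (B.mulVec x i + c i))
              (A.mulVec fun i => σ (B.mulVec x' i + c i))| < ε := by
  classical
  intro ε hε
  obtain ⟨n, φ, Cb, hφcont, hCb0, hφbd, happrox⟩ :=
    IPS.feature_map Kstar Y hY g hg_symm hg_cont hg_pd (ε/2) (by linarith)
  set η : ℝ := min 1 (ε / (2 * (n * (2*Cb+1) + 1))) with hηdef
  have hq0 : (0:ℝ) ≤ n * (2*Cb+1) := by positivity
  have hηpos : 0 < η := lt_min one_pos (by positivity)
  have hη1 : η ≤ 1 := min_le_left _ _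
  have hη2 : η ≤ ε / (2 * (n * (2*Cb+1) + 1)) := min_le_right _ _
  -- a network for each feature component
  have hnets : ∀ k : Fin n, ∃ (mk : ℕ) (a : Fin mk → ℝ) (B : Fin mk → Fin p → ℝ)
      (c : Fin mk → ℝ), ∀ x ∈ IPS.cube p M,
        |φ k (fstar x) - ∑ i, a i * σ ((∑ j, B i j * x j) + c i)| < η := by
    intro k
    have hcont : ContinuousOn (fun x => φ k (fstar x)) (IPS.cube p M) :=
      (hφcont k).comp hfstar_cont (fun x hx => hfstar_maps x hx)
    obtain ⟨F, hFm, hF⟩ := IPS.multiD p M hM σ hσ _ hcont η hηpos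
    obtain ⟨mk, a, B, c, hnet⟩ := IPS.netform σ p hFm
    exact ⟨mk, a, B, c, fun x hx => by rw [← hnet x]; exact hF x hx⟩
  choose mk ak Bk ck hnet using hnets
  set m' : ℕ := Finset.univ.sup mk with hm'def
  have hpad : ∀ k : Fin n, ∃ (a : Fin m' → ℝ) (B : Fin m' → Fin p → ℝ) (c : Fin m' → ℝ),
      ∀ x ∈ IPS.cube p M,
        |φ k (fstar x) - ∑ i, a i * σ ((∑ j, B i j * x j) + c i)| < η := by
    intro k
    obtain ⟨a, B, c, hsum⟩ := IPS.netpad σ p (mk k) m'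
      (Finset.le_sup (Finset.mem_univ k)) (ak k) (Bk k) (ck k)
    exact ⟨a, B, c, fun x hx => by rw [hsum x]; exact hnet k x hx⟩
  choose a B c hnet' using hpad
  -- assemble the big network
  set e : Fin n × Fin m' ≃ Fin (n * m') := finProdFinEquiv with hedef
  set A : Matrix (Fin n) (Fin (n * m')) ℝ :=
    Matrix.of (fun k j => if (e.symm j).1 = k then a k (e.symm j).2 else 0) with hA
  set Bm : Matrix (Fin (n * m')) (Fin p) ℝ :=
    Matrix.of (fun j l => B (e.symm j).1 (e.symm j).2 l) with hBm
  set cm : Fin (n * m') → ℝ := fun j => c (e.symm j).1 (e.symm j).2 with hcm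
  refine ⟨n, n * m', A, Bm, cm, ?_⟩
  have heval : ∀ z : Fin p → ℝ, ∀ k : Fin n,
      (A.mulVec fun i => σ (Bm.mulVec z i + cm i)) k
        = ∑ i : Fin m', a k i * σ ((∑ j, B k i j * z j) + c k i) := by
    intro z k
    show ∑ jj, A k jj * σ (Bm.mulVec z jj + cm jj) = _
    rw [← Equiv.sum_comp e (fun jj => A k jj * σ (Bm.mulVec z jj + cm jj))]
    rw [Fintype.sum_prod_type]
    have hterm : ∀ (k' : Fin n) (i : Fin m'),
        A k (e (k', i)) * σ (Bm.mulVec z (e (k', i)) + cm (e (k', i)))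
          = if k' = k then a k i * σ ((∑ j, B k i j * z j) + c k i) else 0 := by
      intro k' i
      have h1 : e.symm (e (k', i)) = (k', i) := Equiv.symm_apply_apply _ _
      have h2 : A k (e (k', i)) = if k' = k then a k i else 0 := by
        rw [hA]; simp [h1]
      have h3 : Bm.mulVec z (e (k', i)) = ∑ j, B k' i j * z j := by
        rw [hBm, Matrix.mulVec, dotProduct]
        apply Finset.sum_congr rfl
        intro l _
        simp [h1]
      have h4 : cm (e (k', i)) = c k' i := by rw [hcm]; simp [h1]
      rw [h2, h3, h4]
      by_cases hkk : k' = k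
      · subst hkk; simp
      · simp [hkk]
    calc ∑ k', ∑ i, A k (e (k', i)) * σ (Bm.mulVec z (e (k', i)) + cm (e (k', i)))
        = ∑ k', ∑ i, (if k' = k then a k i * σ ((∑ j, B k i j * z j) + c k i) else 0) := by
          exact Finset.sum_congr rfl fun k' _ => Finset.sum_congr rfl fun i _ => hterm k' i
      _ = ∑ i : Fin m', a k i * σ ((∑ j, B k i j * z j) + c k i) := by
          rw [Finset.sum_eq_single_of_mem k (Finset.mem_univ k)]
          · simp
          · intro b _ hb
            simp [hb]
  intro x hx x' hx'
  have hxc : x ∈ IPS.cube p M := hx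
  have hxc' : x' ∈ IPS.cube p M := hx'
  have hyY : fstar x ∈ Y := hfstar_maps x hx
  have hyY' : fstar x' ∈ Y := hfstar_maps x' hx'
  set Nk : Fin n → ℝ := fun k => ∑ i : Fin m', a k i * σ ((∑ j, B k i j * x j) + c k i)
    with hNk
  set Nk' : Fin n → ℝ := fun k => ∑ i : Fin m', a k i * σ ((∑ j, B k i j * x' j) + c k i)
    with hNk'
  have hdot : dotProduct (A.mulVec fun i => σ (Bm.mulVec x i + cm i))
      (A.mulVec fun i => σ (Bm.mulVec x' i + cm i)) = ∑ k, Nk k * Nk' k := by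
    rw [dotProduct]
    apply Finset.sum_congr rfl
    intro k _
    rw [heval x k, heval x' k, hNk, hNk']
  rw [hdot]
  have t1 : |g (fstar x) (fstar x') - ∑ k, φ k (fstar x) * φ k (fstar x')| ≤ ε/2 :=
    happrox _ hyY _ hyY'
  have hperk : ∀ k : Fin n, |φ k (fstar x) * φ k (fstar x') - Nk k * Nk' k|
      ≤ η * (2*Cb+1) := by
    intro k
    have h1 : |φ k (fstar x) - Nk k| < η := hnet' k x hxc
    have h2 : |φ k (fstar x') - Nk' k| < η := hnet' k x' hxc'
    have hb1 : |φ k (fstar x)| ≤ Cb := hφbd k _ hyY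
    have hb2 : |φ k (fstar x')| ≤ Cb := hφbd k _ hyY'
    have hb3 : |Nk' k| ≤ Cb + η := by
      have := abs_sub_abs_le_abs_sub (φ k (fstar x')) (Nk' k)
      have h4 : |Nk' k| - |φ k (fstar x')| ≤ |Nk' k - φ k (fstar x')| :=
        abs_sub_abs_le_abs_sub _ _
      rw [abs_sub_comm] at h4
      linarith
    have e1 : φ k (fstar x) * φ k (fstar x') - Nk k * Nk' k
        = φ k (fstar x) * (φ k (fstar x') - Nk' k) + (φ k (fstar x) - Nk k) * Nk' k := by
      ring
    rw [e1]
    calc |φ k (fstar x) * (φ k (fstar x') - Nk' k) + (φ k (fstar x) - Nk k) * Nk' k|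
        ≤ |φ k (fstar x)| * |φ k (fstar x') - Nk' k| + |φ k (fstar x) - Nk k| * |Nk' k| := by
          refine (abs_add_le _ _).trans ?_
          rw [abs_mul, abs_mul]
      _ ≤ Cb * η + η * (Cb + η) := by
          refine add_le_add (mul_le_mul hb1 h2.le (abs_nonneg _) hCb0) ?_
          exact mul_le_mul h1.le hb3 (abs_nonneg _) hηpos.le
      _ ≤ η * (2*Cb+1) := by nlinarith
  have t2 : |∑ k, φ k (fstar x) * φ k (fstar x') - ∑ k, Nk k * Nk' k|
      ≤ n * (η * (2*Cb+1)) := by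
    rw [← Finset.sum_sub_distrib]
    calc |∑ k, (φ k (fstar x) * φ k (fstar x') - Nk k * Nk' k)|
        ≤ ∑ k, |φ k (fstar x) * φ k (fstar x') - Nk k * Nk' k| :=
          Finset.abs_sum_le_sum_abs _ _
      _ ≤ ∑ _k : Fin n, η * (2*Cb+1) := Finset.sum_le_sum fun k _ => hperk k
      _ = n * (η * (2*Cb+1)) := by rw [Finset.sum_const, Finset.card_univ]; simp [mul_comm]
  have t3 : (n : ℝ) * (η * (2*Cb+1)) < ε/2 := by
    have h5 : η * (2 * ((n : ℝ) * (2*Cb+1) + 1)) ≤ ε := by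
      have := (le_div_iff₀ (show (0:ℝ) < 2 * ((n:ℝ) * (2*Cb+1) + 1) by positivity)).mp hη2
      linarith
    nlinarith [hηpos]
  calc |g (fstar x) (fstar x') - ∑ k, Nk k * Nk' k|
      ≤ |g (fstar x) (fstar x') - ∑ k, φ k (fstar x) * φ k (fstar x')|
        + |∑ k, φ k (fstar x) * φ k (fstar x') - ∑ k, Nk k * Nk' k| := by
        have e2 : g (fstar x) (fstar x') - ∑ k, Nk k * Nk' k
            = (g (fstar x) (fstar x') - ∑ k, φ k (fstar x) * φ k (fstar x'))
              + (∑ k, φ k (fstar x) * φ k (fstar x') - ∑ k, Nk k * Nk' k) := by ring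
        rw [e2]
        exact abs_add_le _ _
    _ < ε/2 + ε/2 := by
        apply add_lt_add_of_le_of_lt t1
        exact lt_of_le_of_lt t2 t3
    _ = ε := by ring
end

section
/- (Approximation theorem for SIPS.) Let X = [-M,M]^p with M > 0, let Y ⊂ ℝ^{K*} be a compact set for some K* ∈ ℕ, let f* : X → Y be continuous, and let g* : Y × Y → ℝ be a conditionally positive definite kernel. Let σ : ℝ → ℝ be either the ReLU function or a non-constant, continuous, bounded, monotonically increasing function. Then for every ε > 0 there exist K, m_f, m_u ∈ ℕ and A ∈ ℝ^{K×m_f}, B ∈ ℝ^{m_f×p}, c ∈ ℝ^{m_f}, e ∈ ℝ^{m_u}, F ∈ ℝ^{m_u×p}, o ∈ ℝ^{m_u} such that, writing f_NN(x) = A σ(B x + c) and u_NN(x) = ⟨e, σ(F x + o)⟩ with σ applied elementwise, |g*(f*(x), f*(x')) − (⟨f_NN(x), f_NN(x')⟩ + u_NN(x) + u_NN(x'))| < ε for all (x, x') ∈ X × X. -/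
set_option maxHeartbeats 1000000
open Finset Set

namespace SIPS

/-- one-hidden-layer scalar-input net -/
noncomputable def net1 {m : ℕ} (σ : ℝ → ℝ) (e a b : Fin m → ℝ) (t : ℝ) : ℝ :=
  ∑ i, e i * σ (a i * t + b i)

def IsNet1 (σ : ℝ → ℝ) (f : ℝ → ℝ) : Prop :=
  ∃ (m : ℕ) (e a b : Fin m → ℝ), f = net1 σ e a b

variable {σ : ℝ → ℝ}

lemma isNet1_zero : IsNet1 σ (fun _ => 0) :=
  ⟨0, ![], ![], ![], by funext t; simp [net1]⟩

lemma IsNet1.add {f g : ℝ → ℝ} (hf : IsNet1 σ f) (hg : IsNet1 σ g) :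
    IsNet1 σ (fun t => f t + g t) := by
  obtain ⟨m₁, e₁, a₁, b₁, rfl⟩ := hf
  obtain ⟨m₂, e₂, a₂, b₂, rfl⟩ := hg
  refine ⟨m₁ + m₂, Fin.append e₁ e₂, Fin.append a₁ a₂, Fin.append b₁ b₂, ?_⟩
  funext t
  simp only [net1, Fin.sum_univ_add, Fin.append_left, Fin.append_right]

lemma IsNet1.const_mul {f : ℝ → ℝ} (r : ℝ) (hf : IsNet1 σ f) :
    IsNet1 σ (fun t => r * f t) := by
  obtain ⟨m, e, a, b, rfl⟩ := hf
  exact ⟨m, fun i => r * e i, a, b, by funext t; simp [net1, Finset.mul_sum, mul_assoc]⟩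

lemma isNet1_sum {ι : Type*} (s : Finset ι) (F : ι → ℝ → ℝ)
    (h : ∀ i ∈ s, IsNet1 σ (F i)) : IsNet1 σ (fun t => ∑ i ∈ s, F i t) := by
  classical
  induction s using Finset.induction with
  | empty => simpa using isNet1_zero
  | @insert a s hx ih =>
    simp only [Finset.sum_insert hx]
    exact (h a (mem_insert_self a s)).add (ih fun i hi => h i (mem_insert_of_mem hi))
/-- quasi-step nets exist for both activation types -/
lemma quasiStep
    (hσ : (σ = fun z => max 0 z) ∨
      ((∃ a b, σ a ≠ σ b) ∧ Continuous σ ∧ (∃ C, ∀ z, |σ z| ≤ C) ∧ Monotone σ))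
    (R θ Δ η : ℝ) (hΔ : 0 < Δ) (hη : 0 < η) :
    ∃ (e a b : Fin 2 → ℝ), ∀ t ∈ Icc (-R) R,
      (-η ≤ net1 σ e a b t ∧ net1 σ e a b t ≤ 1 + η) ∧
      (θ + Δ ≤ t → 1 - η ≤ net1 σ e a b t) ∧
      (t ≤ θ - Δ → net1 σ e a b t ≤ η) := by
  rcases hσ with hσ | ⟨⟨α, β, hab⟩, _, ⟨C, hC⟩, hmono⟩
  · -- ReLU case: ramp
    refine ⟨![1/Δ, -(1/Δ)], ![1, 1], ![Δ - θ, -θ], fun t _ => ?_⟩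
    subst hσ
    have h1 : net1 (fun z => max 0 z) ![1/Δ, -(1/Δ)] ![1, 1] ![Δ - θ, -θ] t
        = (max 0 (t - θ + Δ) - max 0 (t - θ)) / Δ := by
      simp [net1, Fin.sum_univ_two]
      ring_nf
    rw [h1]
    have hA : max 0 (t - θ) ≤ max 0 (t - θ + Δ) := max_le_max le_rfl (by linarith)
    have hB : max 0 (t - θ + Δ) ≤ max 0 (t - θ) + Δ := by
      rcases le_total (t - θ + Δ) 0 with h | h
      · rw [max_eq_left h]; positivity
      · rw [max_eq_right h]; have := le_max_right 0 (t - θ); linarith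
    have h0 : (0:ℝ) ≤ max 0 (t - θ) := le_max_left _ _
    constructor
    · constructor
      · have : (0:ℝ) ≤ (max 0 (t - θ + Δ) - max 0 (t - θ)) / Δ := by
          apply div_nonneg (by linarith) hΔ.le
        linarith
      · rw [div_le_iff₀ hΔ]; nlinarith
    constructor
    · intro ht
      have h2 : max 0 (t - θ + Δ) = t - θ + Δ := max_eq_right (by linarith)
      have h3 : max 0 (t - θ) = t - θ := max_eq_right (by linarith)
      rw [h2, h3, le_div_iff₀ hΔ]; nlinarith
    · intro ht
      have h2 : max 0 (t - θ + Δ) = 0 := max_eq_left (by linarith)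
      have h3 : max 0 (t - θ) = 0 := max_eq_left (by linarith)
      rw [h2, h3]; rw [div_le_iff₀ hΔ]; nlinarith
  · -- bounded monotone case
    have hbddA : BddAbove (Set.range σ) := ⟨C, by rintro _ ⟨z, rfl⟩; exact (abs_le.mp (hC z)).2⟩
    have hbddB : BddBelow (Set.range σ) := ⟨-C, by rintro _ ⟨z, rfl⟩; exact (abs_le.mp (hC z)).1⟩
    set Lp := ⨆ z, σ z with hLp
    set Lm := ⨅ z, σ z with hLm
    have hup : ∀ z, σ z ≤ Lp := fun z => le_ciSup hbddA z
    have hlow : ∀ z, Lm ≤ σ z := fun z => ciInf_le hbddB z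
    have hd : 0 < Lp - Lm := by
      rcases le_total α β with h | h
      · have h1 : σ α < σ β := lt_of_le_of_ne (hmono h) hab
        have := hlow α; have := hup β; linarith
      · have h1 : σ β < σ α := lt_of_le_of_ne (hmono h) (Ne.symm hab)
        have := hlow β; have := hup α; linarith
    set d := Lp - Lm with hdd
    have htop : Filter.Tendsto σ Filter.atTop (nhds Lp) := tendsto_atTop_ciSup hmono hbddA
    have hbot : Filter.Tendsto σ Filter.atBot (nhds Lm) := tendsto_atBot_ciInf hmono hbddB
    have ev1 : ∀ᶠ z in Filter.atTop, Lp - η * d / 2 < σ z :=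
      htop.eventually (eventually_gt_nhds (by nlinarith))
    have ev2 : ∀ᶠ z in Filter.atBot, σ z < Lm + η * d / 2 :=
      hbot.eventually (eventually_lt_nhds (by nlinarith))
    obtain ⟨Z, hZ⟩ := Filter.eventually_atTop.mp ev1
    obtain ⟨Z', hZ'⟩ := Filter.eventually_atBot.mp ev2
    have hlm : ∃ lam : ℝ, 0 < lam ∧ Z ≤ lam * Δ ∧ -lam ≤ Z' ∧ -(lam*Δ) ≤ Z' := by
      refine ⟨1 + max 0 (max (Z/Δ) (max (-Z') (-Z'/Δ))), ?_, ?_, ?_, ?_⟩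
      · have h := le_max_left (0:ℝ) (max (Z/Δ) (max (-Z') (-Z'/Δ))); linarith
      · have h : Z/Δ ≤ max 0 (max (Z/Δ) (max (-Z') (-Z'/Δ))) :=
          le_trans (le_max_left _ _) (le_max_right _ _)
        have h2 : Z = Z/Δ * Δ := by field_simp
        nlinarith
      · have h : -Z' ≤ max 0 (max (Z/Δ) (max (-Z') (-Z'/Δ))) :=
          le_trans (le_trans (le_max_left _ _) (le_max_right _ _)) (le_max_right _ _)
        linarith
      · have h : -Z'/Δ ≤ max 0 (max (Z/Δ) (max (-Z') (-Z'/Δ))) :=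
          le_trans (le_trans (le_max_right _ _) (le_max_right _ _)) (le_max_right _ _)
        have h2 : -Z' = -Z'/Δ * Δ := by field_simp
        nlinarith
    obtain ⟨lam, hlam0, hl1, hl2, hl3⟩ := hlm
    set θ₀ := R + 1 with hθ₀
    refine ⟨![1/d, -(1/d)], ![lam, lam], ![-(lam*θ), -(lam*θ₀)], fun t ht => ?_⟩
    obtain ⟨htl, htr⟩ := ht
    have hq : net1 σ ![1/d, -(1/d)] ![lam, lam] ![-(lam*θ), -(lam*θ₀)] t
        = (σ (lam * (t - θ)) - σ (lam * (t - θ₀))) / d := by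
      simp only [net1, Fin.sum_univ_two, Matrix.cons_val_zero, Matrix.cons_val_one,
        Matrix.head_cons]
      rw [show lam*t + -(lam*θ) = lam*(t-θ) by ring,
        show lam*t + -(lam*θ₀) = lam*(t-θ₀) by ring]
      ring
    rw [hq]
    set X := σ (lam * (t - θ)) with hX
    set Y := σ (lam * (t - θ₀)) with hY
    have hY2 : Y < Lm + η * d / 2 := by
      apply hZ'
      have h1 : t - θ₀ ≤ -1 := by simp only [hθ₀]; linarith
      nlinarith
    have hXl := hlow (lam * (t - θ)); have hXu := hup (lam * (t - θ))
    have hYl := hlow (lam * (t - θ₀))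
    refine ⟨⟨?_, ?_⟩, fun h => ?_, fun h => ?_⟩
    · rw [le_div_iff₀ hd]; nlinarith
    · rw [div_le_iff₀ hd]; nlinarith
    · have hX2 : Lp - η * d / 2 < X := by
        apply hZ
        have h1 : Δ ≤ t - θ := by linarith
        nlinarith
      rw [le_div_iff₀ hd]; nlinarith
    · have hX2 : X < Lm + η * d / 2 := by
        apply hZ'
        have h1 : t - θ ≤ -Δ := by linarith
        nlinarith
      rw [div_le_iff₀ hd]; nlinarith

/-- 1D universal approximation -/
lemma uat1
    (hσ : (σ = fun z => max 0 z) ∨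
      ((∃ a b, σ a ≠ σ b) ∧ Continuous σ ∧ (∃ C, ∀ z, |σ z| ≤ C) ∧ Monotone σ))
    {R ε : ℝ} (hR : 0 < R) (hε : 0 < ε) (φ : ℝ → ℝ)
    (hφ : ContinuousOn φ (Icc (-R) R)) :
    ∃ q, IsNet1 σ q ∧ ∀ t ∈ Icc (-R) R, |φ t - q t| ≤ ε := by
  -- uniform continuity
  have huc := isCompact_Icc.uniformContinuousOn_of_continuous hφ
  rw [Metric.uniformContinuousOn_iff] at huc
  obtain ⟨δ, hδ0, hδ⟩ := huc (ε/8) (by positivity)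
  -- grid
  set n : ℕ := ⌈4*R/δ⌉₊ with hn
  have hn0 : 0 < n := Nat.ceil_pos.mpr (by positivity)
  have hn0' : (0:ℝ) < n := by exact_mod_cast hn0
  set μ : ℝ := 2*R/n with hμ
  have hμ0 : 0 < μ := by positivity
  have hnc : 4*R/δ ≤ (n:ℝ) := Nat.le_ceil _
  have hμδ : μ < δ := by
    rw [hμ, div_lt_iff₀ hn0']
    have h2 : 4*R ≤ δ * n := by
      rw [div_le_iff₀ hδ0] at hnc; linarith [hnc]
    nlinarith
  set tk : ℕ → ℝ := fun k => -R + k * μ with htk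
  set θk : ℕ → ℝ := fun k => tk k + μ/2 with hθk
  set ck : ℕ → ℝ := fun k => φ (tk (k+1)) - φ (tk k) with hck
  have hnμ : (n:ℝ) * μ = 2*R := by rw [hμ]; field_simp
  have htk_mem : ∀ k ≤ n, tk k ∈ Icc (-R) R := by
    intro k hk
    have hk' : (k:ℝ) ≤ n := by exact_mod_cast hk
    simp only [Set.mem_Icc, htk]
    constructor <;> nlinarith
  have hckb : ∀ k < n, |ck k| ≤ ε/8 := by
    intro k hk
    have h1 := hδ (tk (k+1)) (htk_mem _ hk) (tk k) (htk_mem _ hk.le)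
    rw [Real.dist_eq, Real.dist_eq] at h1
    have h2 : |tk (k+1) - tk k| < δ := by
      have : tk (k+1) - tk k = μ := by simp only [htk]; push_cast; ring
      rw [this, abs_of_pos hμ0]; exact hμδ
    exact le_of_lt (h1 h2)
  -- quasi steps
  set Δ : ℝ := μ/4 with hΔdef
  have hΔ0 : 0 < Δ := by positivity
  set η : ℝ := min 1 ((ε/8) / (|φ (-R)| + n * (ε/8) + 1)) with hηdef
  have hη0 : 0 < η := lt_min one_pos (by positivity)
  have hη1 : η ≤ 1 := min_le_left _ _
  have hη2 : (|φ (-R)| + n * (ε/8)) * η ≤ ε/8 := by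
    have h1 : η ≤ (ε/8) / (|φ (-R)| + n * (ε/8) + 1) := min_le_right _ _
    have h2 : (0:ℝ) < |φ (-R)| + n * (ε/8) + 1 := by positivity
    have h3 : (0:ℝ) ≤ |φ (-R)| + n * (ε/8) := by positivity
    calc (|φ (-R)| + n * (ε/8)) * η ≤ (|φ (-R)| + n * (ε/8)) * ((ε/8) / (|φ (-R)| + n * (ε/8) + 1)) := by
          apply mul_le_mul_of_nonneg_left h1 h3
    _ ≤ ε/8 := by
          rw [← mul_div_assoc, div_le_iff₀ h2]
          nlinarith
  have Hq : ∀ k : ℕ, ∃ (e a b : Fin 2 → ℝ), ∀ t ∈ Icc (-R) R,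
      (-η ≤ net1 σ e a b t ∧ net1 σ e a b t ≤ 1 + η) ∧
      (θk k + Δ ≤ t → 1 - η ≤ net1 σ e a b t) ∧
      (t ≤ θk k - Δ → net1 σ e a b t ≤ η) :=
    fun k => quasiStep hσ R (θk k) Δ η hΔ0 hη0
  choose qe qa qb hq using Hq
  set q : ℕ → ℝ → ℝ := fun k => net1 σ (qe k) (qa k) (qb k) with hqdef
  -- constant-one net
  obtain ⟨e0, a0, b0, hq0⟩ := quasiStep hσ R (-R - 2*Δ) Δ η hΔ0 hη0
  set qc : ℝ → ℝ := net1 σ e0 a0 b0 with hqcdef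
  have hqc : ∀ t ∈ Icc (-R) R, |1 - qc t| ≤ η := by
    intro t ht
    obtain ⟨⟨_, h2⟩, h3, _⟩ := hq0 t ht
    have h4 : 1 - η ≤ qc t := h3 (by nlinarith [ht.1])
    rw [abs_le]; constructor <;> [linarith; linarith]
  -- the approximating net
  set N : ℝ → ℝ := fun t => φ (-R) * qc t + ∑ k ∈ Finset.range n, ck k * q k t with hN
  refine ⟨N, ?_, ?_⟩
  · apply IsNet1.add
    · exact IsNet1.const_mul _ ⟨2, e0, a0, b0, rfl⟩
    · exact isNet1_sum _ _ (fun k _ => IsNet1.const_mul _ ⟨2, qe k, qa k, qb k, rfl⟩)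
  intro t ht
  set s : ℝ := t + R with hs
  have hs0 : 0 ≤ s := by simp only [hs]; linarith [ht.1]
  have hsn : s ≤ n * μ := by rw [hnμ]; simp only [hs]; linarith [ht.2]
  have hsμ0 : 0 ≤ s/μ + 1/2 := by positivity
  set J : ℕ := ⌊s/μ + 1/2⌋₊ with hJ
  have hJn : J ≤ n := by
    have h1 : s/μ ≤ n := by rw [div_le_iff₀ hμ0]; linarith
    have : J < n + 1 := by
      rw [hJ, Nat.floor_lt hsμ0]; push_cast; linarith
    omega
  have hJle : (J:ℝ) ≤ s/μ + 1/2 := Nat.floor_le hsμ0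
  have hJgt : s/μ + 1/2 < J + 1 := Nat.lt_floor_add_one _
  have hJμle : (J:ℝ) * μ ≤ s + μ/2 := by
    have h := mul_le_mul_of_nonneg_right hJle hμ0.le
    rw [add_mul, div_mul_cancel₀ _ (ne_of_gt hμ0)] at h
    linarith
  have hJμgt : s < (J:ℝ) * μ + μ/2 := by
    have h1 : s/μ < (J:ℝ) + 1/2 := by linarith
    rw [div_lt_iff₀ hμ0] at h1; nlinarith
  have htkJ : |t - tk J| < δ := by
    have h1 : t - tk J = s - J * μ := by simp only [htk, hs]; ring
    rw [h1, abs_lt]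
    constructor <;> [linarith; linarith]
  have hφtJ : |φ t - φ (tk J)| ≤ ε/8 := by
    have h1 := hδ t ht (tk J) (htk_mem _ hJn)
    rw [Real.dist_eq, Real.dist_eq] at h1
    exact le_of_lt (h1 htkJ)
  -- telescoping
  have htel : ∑ k ∈ Finset.range J, ck k = φ (tk J) - φ (-R) := by
    have h1 : φ (tk 0) = φ (-R) := by norm_num [htk]
    rw [← h1]
    exact Finset.sum_range_sub (fun k => φ (tk k)) J
  have hfil : Finset.filter (fun k => k < J) (Finset.range n) = Finset.range J := by
    ext k; simp only [Finset.mem_filter, Finset.mem_range]; omega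
  have hsum2 : ∑ k ∈ Finset.range n, ck k * ((if k < J then (1:ℝ) else 0) - q k t)
      = (∑ k ∈ Finset.range J, ck k) - ∑ k ∈ Finset.range n, ck k * q k t := by
    simp only [mul_sub, Finset.sum_sub_distrib]
    congr 1
    simp only [mul_ite, mul_one, mul_zero]
    rw [← Finset.sum_filter, hfil]
  have hdecomp : φ t - N t = (φ t - φ (tk J)) + φ (-R) * (1 - qc t)
      + ∑ k ∈ Finset.range n, ck k * ((if k < J then (1:ℝ) else 0) - q k t) := by
    rw [hsum2, htel]; simp only [hN]; ring
  -- bound the sum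
  set B : Finset ℕ := Finset.filter (fun k => |t - θk k| < Δ) (Finset.range n) with hB
  have hcardB : B.card ≤ 1 := by
    rw [Finset.card_le_one]
    intro a ha b hb
    simp only [hB, Finset.mem_filter] at ha hb
    by_contra hab
    have h1 : (1:ℝ) ≤ |(a:ℝ) - (b:ℝ)| := by
      have hz : (a:ℤ) - (b:ℤ) ≠ 0 := by
        intro h; exact hab (by omega)
      have h4 : (1:ℤ) ≤ |(a:ℤ) - (b:ℤ)| := Int.one_le_abs hz
      calc (1:ℝ) = ((1:ℤ):ℝ) := by norm_num
      _ ≤ ((|(a:ℤ) - (b:ℤ)|:ℤ):ℝ) := by exact_mod_cast h4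
      _ = |(a:ℝ) - (b:ℝ)| := by push_cast; ring_nf
    have h2 : |θk a - θk b| = |(a:ℝ) - (b:ℝ)| * μ := by
      have : θk a - θk b = ((a:ℝ) - (b:ℝ)) * μ := by simp only [hθk, htk]; ring
      rw [this, abs_mul, abs_of_pos hμ0]
    have h3 : |θk a - θk b| < 2 * Δ := by
      calc |θk a - θk b| ≤ |θk a - t| + |t - θk b| := abs_sub_le _ _ _
      _ < 2 * Δ := by rw [abs_sub_comm (θk a) t]; linarith [ha.2, hb.2]
    rw [h2] at h3
    have : 2 * Δ = μ/2 := by rw [hΔdef]; ring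
    nlinarith
  have hbound : ∀ k ∈ Finset.range n, k ∉ B →
      |ck k * ((if k < J then (1:ℝ) else 0) - q k t)| ≤ (ε/8) * η := by
    intro k hk hkB
    simp only [hB, Finset.mem_filter, not_and, not_lt] at hkB
    have hkn := Finset.mem_range.mp hk
    have hΔk : Δ ≤ |t - θk k| := hkB hk
    obtain ⟨⟨hql, hqu⟩, hq1, hq2⟩ := hq k t ht
    have habs : |(if k < J then (1:ℝ) else 0) - q k t| ≤ η := by
      rcases le_or_gt (θk k + Δ) t with hcase | hcase
      · -- right of the step: indicator is 1
        have hkJ : k < J := by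
          have h1 : (k:ℝ) * μ + μ/2 ≤ s := by
            have : θk k = -R + k * μ + μ/2 := by simp only [hθk, htk]
            simp only [hs]; rw [this] at hcase; linarith [hΔ0]
          have h2 : (k:ℝ) + 1 ≤ s/μ + 1/2 := by
            have : (k:ℝ) + 1/2 ≤ s/μ := by rw [le_div_iff₀ hμ0]; nlinarith
            linarith
          have : k + 1 ≤ J := by rw [hJ, Nat.le_floor_iff hsμ0]; push_cast; linarith
          omega
        rw [if_pos hkJ, abs_le]
        exact ⟨by linarith [hq1 hcase], by linarith [hq1 hcase]⟩
      · -- left of the step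
        have hcase2 : t ≤ θk k - Δ := by
          rcases le_or_gt t (θk k) with h | h
          · rw [abs_of_nonpos (by linarith)] at hΔk; linarith
          · rw [abs_of_pos (by linarith)] at hΔk; linarith
        have hkJ : ¬ k < J := by
          have h1 : s < (k:ℝ) * μ + μ/2 := by
            have hh : θk k = -R + k * μ + μ/2 := by simp only [hθk, htk]
            simp only [hs]; rw [hh] at hcase2; linarith [hΔ0]
          have h2 : s/μ + 1/2 < (k:ℝ) + 1 := by
            have : s/μ < (k:ℝ) + 1/2 := by rw [div_lt_iff₀ hμ0]; nlinarith
            linarith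
          have : J ≤ k := by
            have : J < k + 1 := by rw [hJ, Nat.floor_lt hsμ0]; push_cast; linarith
            omega
          omega
        rw [if_neg hkJ, abs_le]
        exact ⟨by linarith [hq2 hcase2], by linarith [hq2 hcase2]⟩
    calc |ck k * ((if k < J then (1:ℝ) else 0) - q k t)| = |ck k| * |(if k < J then (1:ℝ) else 0) - q k t| := abs_mul _ _
    _ ≤ (ε/8) * η := mul_le_mul (hckb k hkn) habs (abs_nonneg _) (by positivity)
  have hboundB : ∀ k ∈ B, |ck k * ((if k < J then (1:ℝ) else 0) - q k t)| ≤ (ε/8) * 2 := by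
    intro k hk
    simp only [hB, Finset.mem_filter] at hk
    obtain ⟨⟨hql, hqu⟩, _, _⟩ := hq k t ht
    have habs : |(if k < J then (1:ℝ) else 0) - q k t| ≤ 2 := by
      rw [abs_le]
      split_ifs <;> constructor <;> linarith
    calc |ck k * _| = |ck k| * |(if k < J then (1:ℝ) else 0) - q k t| := abs_mul _ _
    _ ≤ (ε/8) * 2 := mul_le_mul (hckb k (Finset.mem_range.mp hk.1)) habs (abs_nonneg _) (by positivity)
  -- assemble
  have hsumB : ∑ k ∈ B, |ck k * ((if k < J then (1:ℝ) else 0) - q k t)| ≤ ε/4 := by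
    calc ∑ k ∈ B, |ck k * ((if k < J then (1:ℝ) else 0) - q k t)|
        ≤ B.card • ((ε/8) * 2) := Finset.sum_le_card_nsmul _ _ _ hboundB
    _ = (B.card : ℝ) * ((ε/8) * 2) := nsmul_eq_mul _ _
    _ ≤ 1 * ((ε/8) * 2) := by
        apply mul_le_mul_of_nonneg_right _ (by positivity)
        exact_mod_cast hcardB
    _ = ε/4 := by ring
  set Bc : Finset ℕ := Finset.filter (fun k => ¬ |t - θk k| < Δ) (Finset.range n) with hBc
  have hsumBc : ∑ k ∈ Bc, |ck k * ((if k < J then (1:ℝ) else 0) - q k t)| ≤ (n:ℝ) * ((ε/8) * η) := by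
    calc ∑ k ∈ Bc, |ck k * ((if k < J then (1:ℝ) else 0) - q k t)|
        ≤ Bc.card • ((ε/8) * η) := by
          apply Finset.sum_le_card_nsmul
          intro k hk
          simp only [hBc, Finset.mem_filter] at hk
          exact hbound k (Finset.mem_range.mpr (Finset.mem_range.mp hk.1)) (by
            simp only [hB, Finset.mem_filter]; tauto)
    _ = (Bc.card : ℝ) * ((ε/8) * η) := nsmul_eq_mul _ _
    _ ≤ (n:ℝ) * ((ε/8) * η) := by
        apply mul_le_mul_of_nonneg_right _ (by positivity)
        have h9 := Finset.card_filter_le (Finset.range n) (fun k => ¬ |t - θk k| < Δ)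
        rw [Finset.card_range] at h9
        exact_mod_cast h9
  have hsumsplit : ∑ k ∈ Finset.range n, |ck k * ((if k < J then (1:ℝ) else 0) - q k t)|
      = ∑ k ∈ B, |ck k * ((if k < J then (1:ℝ) else 0) - q k t)|
      + ∑ k ∈ Bc, |ck k * ((if k < J then (1:ℝ) else 0) - q k t)| :=
    (Finset.sum_filter_add_sum_filter_not _ _ _).symm
  have hfinal : |φ t - N t| ≤ ε/8 + |φ (-R)| * η + (ε/4 + (n:ℝ) * ((ε/8) * η)) := by
    rw [hdecomp]
    calc |(φ t - φ (tk J)) + φ (-R) * (1 - qc t)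
        + ∑ k ∈ Finset.range n, ck k * ((if k < J then (1:ℝ) else 0) - q k t)|
        ≤ |(φ t - φ (tk J)) + φ (-R) * (1 - qc t)|
          + |∑ k ∈ Finset.range n, ck k * ((if k < J then (1:ℝ) else 0) - q k t)| := abs_add_le _ _
    _ ≤ (|φ t - φ (tk J)| + |φ (-R) * (1 - qc t)|)
          + ∑ k ∈ Finset.range n, |ck k * ((if k < J then (1:ℝ) else 0) - q k t)| := by
        gcongr
        · exact abs_add_le _ _
        · exact Finset.abs_sum_le_sum_abs _ _
    _ ≤ ε/8 + |φ (-R)| * η + (ε/4 + (n:ℝ) * ((ε/8) * η)) := by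
        rw [hsumsplit, abs_mul]
        gcongr <;> first
          | exact hφtJ
          | exact hqc t ht
          | exact hsumB
          | exact hsumBc
  have : |φ (-R)| * η + (n:ℝ) * ((ε/8) * η) ≤ ε/8 := by nlinarith [hη2]
  linarith

variable {p : ℕ} {M : ℝ}

noncomputable def netP {m : ℕ} (σ : ℝ → ℝ) (p : ℕ) (e : Fin m → ℝ)
    (F : Matrix (Fin m) (Fin p) ℝ) (o : Fin m → ℝ) (x : Fin p → ℝ) : ℝ :=
  ∑ i, e i * σ (F.mulVec x i + o i)

def IsNetP (σ : ℝ → ℝ) (p : ℕ) (f : (Fin p → ℝ) → ℝ) : Prop :=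
  ∃ (m : ℕ) (e : Fin m → ℝ) (F : Matrix (Fin m) (Fin p) ℝ) (o : Fin m → ℝ),
    f = netP σ p e F o

lemma isNetP_zero : IsNetP σ p (fun _ => 0) :=
  ⟨0, ![], ![], ![], by funext x; simp [netP]⟩

lemma IsNetP.add {f g : (Fin p → ℝ) → ℝ} (hf : IsNetP σ p f) (hg : IsNetP σ p g) :
    IsNetP σ p (fun x => f x + g x) := by
  obtain ⟨m₁, e₁, F₁, o₁, rfl⟩ := hf
  obtain ⟨m₂, e₂, F₂, o₂, rfl⟩ := hg
  refine ⟨m₁ + m₂, Fin.append e₁ e₂, Matrix.of (Fin.addCases F₁ F₂), Fin.append o₁ o₂, ?_⟩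
  funext x
  simp only [netP, Fin.sum_univ_add, Fin.append_left, Fin.append_right]
  congr 1 <;> apply Finset.sum_congr rfl <;> intro i _ <;>
    simp [Matrix.mulVec, dotProduct, Fin.addCases_left, Fin.addCases_right]
  · erw [Fin.addCases_left]; simp
  · erw [Fin.addCases_right]; simp

lemma IsNetP.const_mul {f : (Fin p → ℝ) → ℝ} (r : ℝ) (hf : IsNetP σ p f) :
    IsNetP σ p (fun x => r * f x) := by
  obtain ⟨m, e, F, o, rfl⟩ := hf
  exact ⟨m, fun i => r * e i, F, o, by funext x; simp [netP, Finset.mul_sum, mul_assoc]⟩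

lemma isNetP_sum {ι : Type*} (s : Finset ι) (F : ι → (Fin p → ℝ) → ℝ)
    (h : ∀ i ∈ s, IsNetP σ p (F i)) : IsNetP σ p (fun x => ∑ i ∈ s, F i x) := by
  classical
  induction s using Finset.induction with
  | empty => simpa using isNetP_zero
  | @insert a s hx ih =>
    simp only [Finset.sum_insert hx]
    exact (h a (mem_insert_self a s)).add (ih fun i hi => h i (mem_insert_of_mem hi))

lemma IsNet1.ridge {f : ℝ → ℝ} (hf : IsNet1 σ f) (w : Fin p → ℝ) :
    IsNetP σ p (fun x => f (∑ j, w j * x j)) := by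
  obtain ⟨m, e, a, b, rfl⟩ := hf
  refine ⟨m, e, Matrix.of (fun i j => a i * w j), b, ?_⟩
  funext x
  simp only [net1, netP]
  apply Finset.sum_congr rfl
  intro i _
  congr 2
  simp [Matrix.mulVec, dotProduct, Finset.mul_sum, mul_assoc]


def cube (p : ℕ) (M : ℝ) : Set (Fin p → ℝ) := {x | ∀ i, |x i| ≤ M}

lemma cube_compact (p : ℕ) (M : ℝ) : IsCompact (cube p M) := by
  have h : cube p M = Set.pi Set.univ (fun _ : Fin p => Icc (-M) M) := by
    ext x; simp [cube, Set.mem_pi, abs_le, Pi.le_def, forall_and]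
  rw [h]
  exact isCompact_univ_pi (fun _ => isCompact_Icc)

lemma contRidge {p : ℕ} {M : ℝ} (w : Fin p → ℝ) (b : ℝ) :
    Continuous fun z : ↥(cube p M) => Real.cos (∑ j, w j * (z : Fin p → ℝ) j + b) := by
  apply Real.continuous_cos.comp
  apply Continuous.add _ continuous_const
  apply continuous_finset_sum
  intro j _
  exact continuous_const.mul ((continuous_apply j).comp continuous_subtype_val)

/-- multivariate universal approximation on the cube -/
lemma uatP
    (hσ : (σ = fun z => max 0 z) ∨
      ((∃ a b, σ a ≠ σ b) ∧ Continuous σ ∧ (∃ C, ∀ z, |σ z| ≤ C) ∧ Monotone σ))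
    (hM : 0 < M) (h : (Fin p → ℝ) → ℝ) (hh : ContinuousOn h (cube p M))
    {ε : ℝ} (hε : 0 < ε) :
    ∃ q, IsNetP σ p q ∧ ∀ x ∈ cube p M, |h x - q x| ≤ ε := by
  classical
  haveI : CompactSpace ↥(cube p M) := isCompact_iff_compactSpace.mp (cube_compact p M)
  -- the set of cosine-ridge functions
  set G : Set C(↥(cube p M), ℝ) :=
    {f | ∃ (w : Fin p → ℝ) (b : ℝ), ∀ x : ↥(cube p M),
      f x = Real.cos (∑ j, w j * (x : Fin p → ℝ) j + b)} with hG
  have hone : (1 : C(↥(cube p M), ℝ)) ∈ G := by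
    refine ⟨0, 0, fun x => ?_⟩
    simp
  have hmulG : ∀ f ∈ G, ∀ g ∈ G, f * g ∈ Submodule.span ℝ G := by
    rintro f ⟨w, b, hf⟩ g ⟨w', b', hg⟩
    set h₁ : C(↥(cube p M), ℝ) :=
      ⟨fun x => Real.cos (∑ j, (w + w') j * (x : Fin p → ℝ) j + (b + b')), contRidge _ _⟩ with hh₁
    set h₂ : C(↥(cube p M), ℝ) :=
      ⟨fun x => Real.cos (∑ j, (w - w') j * (x : Fin p → ℝ) j + (b - b')), contRidge _ _⟩ with hh₂
    have h₁G : h₁ ∈ G := ⟨w + w', b + b', fun x => rfl⟩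
    have h₂G : h₂ ∈ G := ⟨w - w', b - b', fun x => rfl⟩
    have key : f * g = (1/2 : ℝ) • h₁ + (1/2 : ℝ) • h₂ := by
      ext x
      simp only [ContinuousMap.mul_apply, ContinuousMap.add_apply, ContinuousMap.smul_apply,
        smul_eq_mul, hf x, hg x]
      rw [hh₁, hh₂]
      simp only [ContinuousMap.coe_mk]
      have e1 : ∑ j, (w + w') j * (x : Fin p → ℝ) j
          = (∑ j, w j * (x : Fin p → ℝ) j) + ∑ j, w' j * (x : Fin p → ℝ) j := by
        rw [← Finset.sum_add_distrib]; apply Finset.sum_congr rfl; intro j _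
        simp [Pi.add_apply]; ring
      have e2 : ∑ j, (w - w') j * (x : Fin p → ℝ) j
          = (∑ j, w j * (x : Fin p → ℝ) j) - ∑ j, w' j * (x : Fin p → ℝ) j := by
        rw [← Finset.sum_sub_distrib]; apply Finset.sum_congr rfl; intro j _
        simp [Pi.sub_apply]; ring
      have trig : ∀ a c : ℝ, Real.cos a * Real.cos c
          = (Real.cos (a+c) + Real.cos (a-c))/2 := by
        intro a c; rw [Real.cos_add, Real.cos_sub]; ring
      set A := ∑ j, w j * (x : Fin p → ℝ) j
      set B := ∑ j, w' j * (x : Fin p → ℝ) j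
      rw [e1, e2, show A + B + (b + b') = (A + b) + (B + b') by ring,
        show A - B + (b - b') = (A + b) - (B + b') by ring, trig]
      ring
    rw [key]
    exact Submodule.add_mem _
      (Submodule.smul_mem _ _ (Submodule.subset_span h₁G))
      (Submodule.smul_mem _ _ (Submodule.subset_span h₂G))
  have hmul : ∀ (f g : C(↥(cube p M), ℝ)), f ∈ Submodule.span ℝ G →
      g ∈ Submodule.span ℝ G → f * g ∈ Submodule.span ℝ G := by
    intro f g hf hg
    have h1 : f * g ∈ Submodule.span ℝ G * Submodule.span ℝ G :=
      Submodule.mul_mem_mul hf hg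
    rw [Submodule.span_mul_span] at h1
    refine Submodule.span_le.mpr ?_ h1
    rintro _ ⟨f', hf', g', hg', rfl⟩
    exact hmulG f' hf' g' hg'
  set SA : Subalgebra ℝ C(↥(cube p M), ℝ) :=
    Submodule.toSubalgebra (Submodule.span ℝ G) (Submodule.subset_span hone) hmul with hSA
  have hsep : SA.SeparatesPoints := by
    intro x y hxy
    have hxy' : (x : Fin p → ℝ) ≠ (y : Fin p → ℝ) := fun hc => hxy (Subtype.ext hc)
    obtain ⟨i, hi⟩ := Function.ne_iff.mp hxy'
    set τ : ℝ := Real.pi / (2 * (M + 1)) with hτ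
    have hτ0 : 0 < τ := by positivity
    set w : Fin p → ℝ := fun j => if j = i then τ else 0 with hw
    set f : C(↥(cube p M), ℝ) :=
      ⟨fun z => Real.cos (∑ j, w j * (z : Fin p → ℝ) j + -(Real.pi/2)), contRidge _ _⟩ with hf
    refine ⟨f, ⟨f, Submodule.subset_span ⟨w, -(Real.pi/2), fun z => rfl⟩, rfl⟩, ?_⟩
    have hsum : ∀ z : ↥(cube p M), ∑ j, w j * (z : Fin p → ℝ) j = τ * (z : Fin p → ℝ) i := by
      intro z
      rw [hw, Finset.sum_eq_single i]
      · simp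
      · intro j _ hj; simp [hj]
      · intro hi'; exact absurd (Finset.mem_univ i) hi'
    have hcs : ∀ z : ↥(cube p M),
        f z = Real.sin (τ * (z : Fin p → ℝ) i) := by
      intro z
      rw [hf]
      simp only [ContinuousMap.coe_mk]
      rw [hsum z, show τ * (z : Fin p → ℝ) i + -(Real.pi/2)
        = -(Real.pi/2 - τ * (z : Fin p → ℝ) i) by ring, Real.cos_neg,
        Real.cos_pi_div_two_sub]
    have hmem : ∀ z : ↥(cube p M), τ * (z : Fin p → ℝ) i ∈ Icc (-(Real.pi/2)) (Real.pi/2) := by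
      intro z
      have hz := z.2 i
      have hb : |τ * (z : Fin p → ℝ) i| ≤ τ * M := by
        rw [abs_mul, abs_of_pos hτ0]
        exact mul_le_mul_of_nonneg_left hz hτ0.le
      have hτM : τ * M < Real.pi/2 := by
        rw [hτ]
        rw [div_mul_eq_mul_div, div_lt_div_iff₀ (by positivity) (by norm_num : (0:ℝ) < 2)]
        nlinarith [Real.pi_pos]
      rw [abs_le] at hb
      constructor <;> [linarith [hb.1]; linarith [hb.2]]
    intro hc
    rw [hcs x, hcs y] at hc
    have := Real.injOn_sin (hmem x) (hmem y) hc
    exact hi (by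
      have := mul_left_cancel₀ (ne_of_gt hτ0) this
      exact this)
  -- Stone–Weierstrass
  obtain ⟨gA, hgA⟩ := ContinuousMap.exists_mem_subalgebra_near_continuous_of_separatesPoints
    SA hsep ((cube p M).restrict h) (hh.restrict) (ε/2) (by positivity)
  have hgmem : (gA : C(↥(cube p M), ℝ)) ∈ Submodule.span ℝ G := gA.2
  rw [Submodule.mem_span_set'] at hgmem
  obtain ⟨n, c, gens, hsum⟩ := hgmem
  -- data of each generator
  have hgen : ∀ i : Fin n, ∃ (w : Fin p → ℝ) (b : ℝ), ∀ x : ↥(cube p M),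
      (gens i : C(↥(cube p M), ℝ)) x = Real.cos (∑ j, w j * (x : Fin p → ℝ) j + b) :=
    fun i => (gens i).2
  choose wg bg hwg using hgen
  -- approximate each generator by a net
  set εc : ℝ := (ε/2) / (∑ i, |c i| + 1) with hεc
  have hεc0 : 0 < εc := by positivity
  have hnet : ∀ i : Fin n, ∃ q, IsNetP σ p q ∧ ∀ x ∈ cube p M,
      |Real.cos (∑ j, wg i j * x j + bg i) - q x| ≤ εc := by
    intro i
    set R : ℝ := M * ∑ j, |wg i j| + 1 with hR
    have hR0 : 0 < R := by positivity
    obtain ⟨q1, hq1net, hq1⟩ := uat1 hσ hR0 hεc0 (fun t => Real.cos (t + bg i))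
      (Continuous.continuousOn (by fun_prop))
    refine ⟨fun x => q1 (∑ j, wg i j * x j), hq1net.ridge _, fun x hx => ?_⟩
    have hxr : (∑ j, wg i j * x j) ∈ Icc (-R) R := by
      have h1 : |∑ j, wg i j * x j| ≤ M * ∑ j, |wg i j| := by
        calc |∑ j, wg i j * x j| ≤ ∑ j, |wg i j * x j| := Finset.abs_sum_le_sum_abs _ _
        _ ≤ ∑ j, |wg i j| * M := by
            apply Finset.sum_le_sum; intro j _
            rw [abs_mul]
            exact mul_le_mul_of_nonneg_left (hx j) (abs_nonneg _)
        _ = M * ∑ j, |wg i j| := by rw [← Finset.sum_mul]; ring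
      rw [abs_le] at h1
      constructor <;> [linarith [h1.1]; linarith [h1.2]]
    exact hq1 _ hxr
  choose qg hqgnet hqg using hnet
  refine ⟨fun x => ∑ i, c i * qg i x, isNetP_sum _ _ (fun i _ => IsNetP.const_mul (c i) (hqgnet i)), ?_⟩
  intro x hx
  have hx' : (⟨x, hx⟩ : ↥(cube p M)) = ⟨x, hx⟩ := rfl
  have h1 : |h x - (gA : C(↥(cube p M), ℝ)) ⟨x, hx⟩| < ε/2 := by
    have := hgA ⟨x, hx⟩
    rw [Real.norm_eq_abs] at this
    rw [abs_sub_comm]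
    exact this
  have h2 : (gA : C(↥(cube p M), ℝ)) ⟨x, hx⟩ = ∑ i, c i * Real.cos (∑ j, wg i j * x j + bg i) := by
    rw [← hsum]
    rw [ContinuousMap.sum_apply]
    apply Finset.sum_congr rfl
    intro i _
    rw [ContinuousMap.smul_apply, smul_eq_mul, hwg i ⟨x, hx⟩]
  have h3 : |(gA : C(↥(cube p M), ℝ)) ⟨x, hx⟩ - ∑ i, c i * qg i x| ≤ ε/2 := by
    rw [h2, ← Finset.sum_sub_distrib]
    calc |∑ i, (c i * Real.cos (∑ j, wg i j * x j + bg i) - c i * qg i x)|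
        ≤ ∑ i, |c i * Real.cos (∑ j, wg i j * x j + bg i) - c i * qg i x| :=
          Finset.abs_sum_le_sum_abs _ _
    _ ≤ ∑ i, |c i| * εc := by
        apply Finset.sum_le_sum; intro i _
        rw [← mul_sub, abs_mul]
        exact mul_le_mul_of_nonneg_left (hqg i x hx) (abs_nonneg _)
    _ = (∑ i, |c i|) * εc := by rw [← Finset.sum_mul]
    _ ≤ ε/2 := by
        rw [hεc, ← mul_div_assoc, div_le_iff₀ (by positivity)]
        nlinarith [Finset.sum_nonneg (fun i (_ : i ∈ Finset.univ) => abs_nonneg (c i)), hε]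
  calc |h x - ∑ i, c i * qg i x|
      ≤ |h x - (gA : C(↥(cube p M), ℝ)) ⟨x, hx⟩|
        + |(gA : C(↥(cube p M), ℝ)) ⟨x, hx⟩ - ∑ i, c i * qg i x| := abs_sub_le _ _ _
  _ ≤ ε := by linarith

/-- vector-valued universal approximation with shared hidden layer -/
lemma vecUAT
    (hσ : (σ = fun z => max 0 z) ∨
      ((∃ a b, σ a ≠ σ b) ∧ Continuous σ ∧ (∃ C, ∀ z, |σ z| ≤ C) ∧ Monotone σ))
    (hM : 0 < M) (K : ℕ) (a : Fin K → (Fin p → ℝ) → ℝ)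
    (ha : ∀ l, ContinuousOn (a l) (cube p M)) {ε : ℝ} (hε : 0 < ε) :
    ∃ (m : ℕ) (A : Matrix (Fin K) (Fin m) ℝ) (B : Matrix (Fin m) (Fin p) ℝ)
      (c : Fin m → ℝ), ∀ l, ∀ x ∈ cube p M,
        |a l x - ∑ i, A l i * σ (B.mulVec x i + c i)| ≤ ε := by
  induction K with
  | zero => exact ⟨0, 0, 0, 0, fun l => l.elim0⟩
  | succ K ih =>
    obtain ⟨m₁, A₁, B₁, c₁, h₁⟩ := ih (fun l => a l.succ) (fun l => ha l.succ)
    obtain ⟨q, ⟨m₂, e₂, F₂, o₂, rfl⟩, h₂⟩ := uatP hσ hM (a 0) (ha 0) hε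
    refine ⟨m₁ + m₂, Matrix.of (fun l => Fin.cases (Fin.append (0 : Fin m₁ → ℝ) e₂)
      (fun l' => Fin.append (A₁ l') (0 : Fin m₂ → ℝ)) l),
      Matrix.of (Fin.addCases B₁ F₂), Fin.append c₁ o₂, ?_⟩
    intro l x hx
    have hrow1 : ∀ i : Fin m₁,
        (Matrix.of (Fin.addCases B₁ F₂)).mulVec x (Fin.castAdd m₂ i) = B₁.mulVec x i := by
      intro i
      simp [Matrix.mulVec, dotProduct, Matrix.of_apply, Fin.addCases_left]
      erw [Fin.addCases_left]
    have hrow2 : ∀ i : Fin m₂,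
        (Matrix.of (Fin.addCases B₁ F₂)).mulVec x (Fin.natAdd m₁ i) = F₂.mulVec x i := by
      intro i
      simp [Matrix.mulVec, dotProduct, Matrix.of_apply, Fin.addCases_right]
      erw [Fin.addCases_right]
    refine Fin.cases ?_ ?_ l
    · have : ∑ i, Matrix.of (fun l => Fin.cases (Fin.append (0 : Fin m₁ → ℝ) e₂)
          (fun l' => Fin.append (A₁ l') (0 : Fin m₂ → ℝ)) l) 0 i
            * σ ((Matrix.of (Fin.addCases B₁ F₂)).mulVec x i + Fin.append c₁ o₂ i)
          = netP σ p e₂ F₂ o₂ x := by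
        rw [Fin.sum_univ_add]
        simp only [Matrix.of_apply, Fin.cases_zero, Fin.append_left, Fin.append_right,
          Pi.zero_apply, zero_mul, Finset.sum_const_zero, zero_add]
        unfold netP
        apply Finset.sum_congr rfl
        intro i _
        rw [hrow2 i]
      rw [this]
      exact h₂ x hx
    · intro l'
      have : ∑ i, Matrix.of (fun l => Fin.cases (Fin.append (0 : Fin m₁ → ℝ) e₂)
          (fun l' => Fin.append (A₁ l') (0 : Fin m₂ → ℝ)) l) l'.succ i
            * σ ((Matrix.of (Fin.addCases B₁ F₂)).mulVec x i + Fin.append c₁ o₂ i)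
          = ∑ i, A₁ l' i * σ (B₁.mulVec x i + c₁ i) := by
        rw [Fin.sum_univ_add]
        simp only [Matrix.of_apply, Fin.cases_succ, Fin.append_left, Fin.append_right,
          Pi.zero_apply, zero_mul, Finset.sum_const_zero, add_zero]
        apply Finset.sum_congr rfl
        intro i _
        rw [hrow1 i]
      rw [this]
      exact h₁ l' x hx

/-- centering a conditionally positive definite kernel gives a PSD kernel -/
lemma cpd_centered {E : Type*} (Y : Set E) (g : E → E → ℝ)
    (hg_symm : ∀ y ∈ Y, ∀ y' ∈ Y, g y y' = g y' y)
    (hg_cpd : ∀ (n : ℕ) (c : Fin n → ℝ) (y : Fin n → E),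
      (∑ i, c i = 0) → (∀ i, y i ∈ Y) → 0 ≤ ∑ i, ∑ j, c i * c j * g (y i) (y j))
    (y₀ : E) (hy₀ : y₀ ∈ Y)
    {ι : Type*} [Fintype ι] (c : ι → ℝ) (y : ι → E) (hy : ∀ v, y v ∈ Y) :
    0 ≤ ∑ v, ∑ w, c v * c w *
      (g (y v) (y w) - g (y v) y₀ - g (y w) y₀ + g y₀ y₀) := by
  classical
  set n := Fintype.card ι with hn
  set eqv := (Fintype.equivFin ι) with heqv
  set S := ∑ v, c v with hS
  set P := ∑ v, c v * g (y v) y₀ with hP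
  set c' : Fin (n+1) → ℝ := Fin.snoc (c ∘ eqv.symm) (-S) with hc'
  set y' : Fin (n+1) → E := Fin.snoc (y ∘ eqv.symm) y₀ with hy'
  have hsum : ∑ i, c' i = 0 := by
    rw [Fin.sum_univ_castSucc]
    simp only [hc', Fin.snoc_castSucc, Fin.snoc_last, Function.comp_apply]
    rw [Equiv.sum_comp eqv.symm c]
    ring
  have hymem : ∀ i, y' i ∈ Y := by
    intro i
    refine Fin.lastCases ?_ ?_ i
    · simp only [hy', Fin.snoc_last]; exact hy₀
    · intro j; simp only [hy', Fin.snoc_castSucc, Function.comp_apply]; exact hy _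
  have hT := hg_cpd (n+1) c' y' hsum hymem
  -- expand T
  have transfer : ∀ f : ι → ℝ, ∑ i : Fin n, f (eqv.symm i) = ∑ v, f v :=
    fun f => Equiv.sum_comp eqv.symm f
  have hTval : ∑ i, ∑ j, c' i * c' j * g (y' i) (y' j)
      = (∑ v, ∑ w, c v * c w * g (y v) (y w)) - S * P - S * P + S * S * g y₀ y₀ := by
    rw [Fin.sum_univ_castSucc]
    have hinner : ∀ i : Fin n, ∑ j : Fin (n+1), c' i.castSucc * c' j * g (y' i.castSucc) (y' j)
        = (∑ j : Fin n, c (eqv.symm i) * c (eqv.symm j) * g (y (eqv.symm i)) (y (eqv.symm j)))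
          + c (eqv.symm i) * (-S) * g (y (eqv.symm i)) y₀ := by
      intro i
      rw [Fin.sum_univ_castSucc]
      simp only [hc', hy', Fin.snoc_castSucc, Fin.snoc_last, Function.comp_apply]
    have hlast : ∑ j : Fin (n+1), c' (Fin.last n) * c' j * g (y' (Fin.last n)) (y' j)
        = (∑ j : Fin n, -S * c (eqv.symm j) * g y₀ (y (eqv.symm j))) + S * S * g y₀ y₀ := by
      rw [Fin.sum_univ_castSucc]
      simp only [hc', hy', Fin.snoc_castSucc, Fin.snoc_last, Function.comp_apply]
      congr 1
      ring
    have hmid : ∑ i : Fin n, ∑ j : Fin (n+1), c' i.castSucc * c' j * g (y' i.castSucc) (y' j)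
        = ∑ i : Fin n, ((∑ j : Fin n, c (eqv.symm i) * c (eqv.symm j)
            * g (y (eqv.symm i)) (y (eqv.symm j)))
          + c (eqv.symm i) * (-S) * g (y (eqv.symm i)) y₀) :=
      Finset.sum_congr rfl (fun i _ => hinner i)
    rw [hmid, hlast, Finset.sum_add_distrib]
    have e1 : ∑ i : Fin n, ∑ j : Fin n,
        c (eqv.symm i) * c (eqv.symm j) * g (y (eqv.symm i)) (y (eqv.symm j))
        = ∑ v, ∑ w, c v * c w * g (y v) (y w) := by
      refine (transfer (fun v => ∑ j : Fin n, c v * c (eqv.symm j) * g (y v) (y (eqv.symm j)))).trans ?_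
      exact Finset.sum_congr rfl fun v _ => transfer (fun w => c v * c w * g (y v) (y w))
    have e2 : ∑ i : Fin n, c (eqv.symm i) * (-S) * g (y (eqv.symm i)) y₀ = -(S * P) := by
      refine (transfer (fun v => c v * (-S) * g (y v) y₀)).trans ?_
      calc ∑ v, c v * (-S) * g (y v) y₀
          = ∑ v, (-S) * (c v * g (y v) y₀) :=
            Finset.sum_congr rfl fun v _ => by ring
      _ = (-S) * ∑ v, (c v * g (y v) y₀) := (Finset.mul_sum _ _ _).symm
      _ = -(S * P) := by rw [hP]; ring
    have e3 : ∑ j : Fin n, -S * c (eqv.symm j) * g y₀ (y (eqv.symm j)) = -(S * P) := by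
      refine (transfer (fun v => -S * c v * g y₀ (y v))).trans ?_
      calc ∑ v, -S * c v * g y₀ (y v)
          = ∑ v, (-S) * (c v * g (y v) y₀) :=
            Finset.sum_congr rfl fun v _ => by
              rw [hg_symm y₀ hy₀ (y v) (hy v)]; ring
      _ = (-S) * ∑ v, (c v * g (y v) y₀) := (Finset.mul_sum _ _ _).symm
      _ = -(S * P) := by rw [hP]; ring
    rw [e1, e2, e3]
    ring
  rw [hTval] at hT
  -- expand the goal
  have split : ∀ (f₁ f₂ f₃ f₄ : ι → ι → ℝ),
      ∑ v, ∑ w, (f₁ v w - f₂ v w - f₃ v w + f₄ v w)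
      = ((∑ v, ∑ w, f₁ v w) - ∑ v, ∑ w, f₂ v w)
        - (∑ v, ∑ w, f₃ v w) + ∑ v, ∑ w, f₄ v w := by
    intros f₁ f₂ f₃ f₄
    simp only [Finset.sum_add_distrib, Finset.sum_sub_distrib]
  have hgoal : ∑ v, ∑ w, c v * c w *
      (g (y v) (y w) - g (y v) y₀ - g (y w) y₀ + g y₀ y₀)
      = (∑ v, ∑ w, c v * c w * g (y v) (y w)) - S * P - S * P + S * S * g y₀ y₀ := by
    calc ∑ v, ∑ w, c v * c w * (g (y v) (y w) - g (y v) y₀ - g (y w) y₀ + g y₀ y₀)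
        = ∑ v, ∑ w, (c v * c w * g (y v) (y w) - (c v * g (y v) y₀) * c w
            - c v * (c w * g (y w) y₀) + c v * (c w * g y₀ y₀)) :=
          Finset.sum_congr rfl fun v _ => Finset.sum_congr rfl fun w _ => by ring
    _ = ((∑ v, ∑ w, c v * c w * g (y v) (y w))
          - ∑ v, ∑ w, (c v * g (y v) y₀) * c w)
          - (∑ v, ∑ w, c v * (c w * g (y w) y₀))
          + ∑ v, ∑ w, c v * (c w * g y₀ y₀) := split _ _ _ _
    _ = (∑ v, ∑ w, c v * c w * g (y v) (y w)) - S * P - S * P + S * S * g y₀ y₀ := by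
        have q2 : ∑ v, ∑ w, (c v * g (y v) y₀) * c w = P * S := by
          rw [← Finset.sum_mul_sum, hP, hS]
        have q3 : ∑ v, ∑ w, c v * (c w * g (y w) y₀) = S * P := by
          rw [← Finset.sum_mul_sum, hP, hS]
        have q4 : ∑ v, ∑ w, c v * (c w * g y₀ y₀) = S * (S * g y₀ y₀) := by
          rw [← Finset.sum_mul_sum, hS]
          congr 1
          rw [Finset.sum_mul]
        rw [q2, q3, q4]
        ring
  rw [hgoal]
  exact hT

noncomputable def hat (μ c t : ℝ) : ℝ := max 0 (1 - |t - c|/μ)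

lemma hat_nonneg (μ c t : ℝ) : 0 ≤ hat μ c t := le_max_left _ _

lemma hat_le_one (μ c t : ℝ) (hμ : 0 < μ) : hat μ c t ≤ 1 := by
  apply max_le (by norm_num)
  have : 0 ≤ |t - c|/μ := by positivity
  linarith

lemma hat_ne_zero (μ c t : ℝ) (hμ : 0 < μ) (h : hat μ c t ≠ 0) : |t - c| ≤ μ := by
  by_contra hc
  push_neg at hc
  apply h
  have : 1 - |t - c|/μ ≤ 0 := by
    rw [sub_nonpos, le_div_iff₀ hμ]; linarith
  exact max_eq_left this

/-- 1D partition of unity -/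
lemma hat_sum (M : ℝ) (hM : 0 < M) (N : ℕ) (hN : 0 < N) (t : ℝ) (ht : t ∈ Icc (-M) M) :
    ∑ j ∈ Finset.range (N+1), hat (2*M/N) (-M + j * (2*M/N)) t = 1 := by
  set μ : ℝ := 2*M/N with hμdef
  have hN' : (0:ℝ) < N := by exact_mod_cast hN
  have hμ0 : 0 < μ := by positivity
  set u : ℝ := (t + M)/μ with hu
  have hu0 : 0 ≤ u := by
    apply div_nonneg _ hμ0.le
    linarith [ht.1]
  have huN : u ≤ N := by
    rw [hu, div_le_iff₀ hμ0, hμdef]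
    have : (N:ℝ) * (2*M/N) = 2*M := by field_simp
    rw [this]; linarith [ht.2]
  have hhat : ∀ j : ℕ, hat μ (-M + j * μ) t = max 0 (1 - |u - j|) := by
    intro j
    have h1 : t - (-M + j * μ) = (u - j) * μ := by
      rw [hu]; field_simp; ring
    rw [hat, h1, abs_mul, abs_of_pos hμ0, mul_div_assoc, div_self (ne_of_gt hμ0), mul_one]
  set J : ℕ := min (N-1) ⌊u⌋₊ with hJ
  have hJu : (J:ℝ) ≤ u := by
    rcases le_or_gt ⌊u⌋₊ (N-1) with h | h
    · have : J = ⌊u⌋₊ := by omega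
      rw [this]; exact Nat.floor_le hu0
    · have h2 : J = N - 1 := by omega
      have h3 : (↑(N-1) : ℝ) ≤ ⌊u⌋₊ := by exact_mod_cast le_of_lt h
      rw [h2]
      exact le_trans h3 (Nat.floor_le hu0)
  have huJ : u ≤ (J:ℝ) + 1 := by
    rcases le_or_gt ⌊u⌋₊ (N-1) with h | h
    · have : J = ⌊u⌋₊ := by omega
      rw [this]; exact (Nat.lt_floor_add_one u).le
    · have h2 : J = N - 1 := by omega
      have h3 : ((J:ℝ) + 1) = N := by
        rw [h2]; push_cast [Nat.cast_sub hN]; ring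
      rw [h3]; exact huN
  have hJN : J + 1 ≤ N := by omega
  have hzero : ∀ j ∈ Finset.range (N+1), j ∉ ({J, J+1} : Finset ℕ) →
      max 0 (1 - |u - j|) = 0 := by
    intro j _ hj
    simp only [Finset.mem_insert, Finset.mem_singleton] at hj
    push_neg at hj
    have : (1:ℝ) ≤ |u - j| := by
      rcases Nat.lt_or_ge j J with h | h
      · have : (j:ℝ) + 1 ≤ J := by exact_mod_cast h
        rw [abs_of_nonneg (by linarith)]; linarith
      · have h2 : J + 2 ≤ j := by omega
        have : (J:ℝ) + 2 ≤ j := by exact_mod_cast h2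
        rw [abs_of_nonpos (by linarith)]; linarith
    exact max_eq_left (by linarith)
  have hsub : ({J, J+1} : Finset ℕ) ⊆ Finset.range (N+1) := by
    intro j hj
    simp only [Finset.mem_insert, Finset.mem_singleton] at hj
    rcases hj with rfl | rfl <;> (rw [Finset.mem_range]; omega)
  rw [Finset.sum_congr rfl (fun j _ => hhat j)]
  rw [← Finset.sum_subset hsub (fun j hj hj' => hzero j hj hj')]
  rw [Finset.sum_pair (by omega : J ≠ J + 1)]
  have hcast : ((J+1 : ℕ) : ℝ) = (J:ℝ) + 1 := by push_cast; ring
  rw [hcast, abs_of_nonneg (by linarith : (0:ℝ) ≤ u - J),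
    abs_of_nonpos (by linarith : u - ((J:ℝ)+1) ≤ 0),
    max_eq_right (by linarith), max_eq_right (by linarith)]
  ring

end SIPS

open SIPS

/-- Approximation theorem for the shifted inner-product similarity (SIPS) model:
for a continuous `f* : [-M,M]ᵖ → Y` into a compact `Y ⊆ ℝ^{K*}` and a conditionally
positive definite kernel `g* : Y × Y → ℝ`, and an activation `σ` which is either ReLU or
non-constant, continuous, bounded and monotone increasing, for every `ε > 0` there are
one-hidden-layer neural networks `f_NN(x) = A σ(Bx + c)` and `u_NN(x) = ⟨e, σ(Fx + o)⟩`
such that `|g*(f*(x), f*(x')) - (⟨f_NN(x), f_NN(x')⟩ + u_NN(x) + u_NN(x'))| < ε`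
on the cube. -/
theorem approximation_theorem_for_SIPS
    (p Kstar : ℕ) (M : ℝ) (hM : 0 < M)
    (Y : Set (EuclideanSpace ℝ (Fin Kstar))) (hY : IsCompact Y)
    (fstar : (Fin p → ℝ) → EuclideanSpace ℝ (Fin Kstar))
    (hfstar_cont : ContinuousOn fstar {x : Fin p → ℝ | ∀ i, |x i| ≤ M})
    (hfstar_maps : ∀ x ∈ {x : Fin p → ℝ | ∀ i, |x i| ≤ M}, fstar x ∈ Y)
    (g : EuclideanSpace ℝ (Fin Kstar) → EuclideanSpace ℝ (Fin Kstar) → ℝ)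
    (hg_symm : ∀ y ∈ Y, ∀ y' ∈ Y, g y y' = g y' y)
    (hg_cont : ContinuousOn (fun yy : EuclideanSpace ℝ (Fin Kstar) × EuclideanSpace ℝ (Fin Kstar) =>
      g yy.1 yy.2) (Y ×ˢ Y))
    (hg_cpd : ∀ (n : ℕ) (c : Fin n → ℝ) (y : Fin n → EuclideanSpace ℝ (Fin Kstar)),
      (∑ i, c i = 0) → (∀ i, y i ∈ Y) → 0 ≤ ∑ i, ∑ j, c i * c j * g (y i) (y j))
    (σ : ℝ → ℝ)
    (hσ : (σ = fun z => max 0 z) ∨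
      ((∃ a b, σ a ≠ σ b) ∧ Continuous σ ∧ (∃ C, ∀ z, |σ z| ≤ C) ∧ Monotone σ)) :
    ∀ ε > (0 : ℝ), ∃ (K mf mu : ℕ) (A : Matrix (Fin K) (Fin mf) ℝ)
      (B : Matrix (Fin mf) (Fin p) ℝ) (c : Fin mf → ℝ)
      (e : Fin mu → ℝ) (F : Matrix (Fin mu) (Fin p) ℝ) (o : Fin mu → ℝ),
      ∀ x ∈ {x : Fin p → ℝ | ∀ i, |x i| ≤ M}, ∀ x' ∈ {x : Fin p → ℝ | ∀ i, |x i| ≤ M},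
        |g (fstar x) (fstar x')
          - (dotProduct
              (A.mulVec fun i => σ (B.mulVec x i + c i))
              (A.mulVec fun i => σ (B.mulVec x' i + c i))
            + dotProduct e (fun i => σ (F.mulVec x i + o i))
            + dotProduct e (fun i => σ (F.mulVec x' i + o i)))| < ε := by
  intro ε hε
  classical
  have hcube_eq : {x : Fin p → ℝ | ∀ i, |x i| ≤ M} = cube p M := rfl
  rw [hcube_eq] at hfstar_cont hfstar_maps
  have hx₀ : (fun _ => 0 : Fin p → ℝ) ∈ cube p M := fun i => by
    simp only [abs_zero]; exact hM.le
  set y₀ : EuclideanSpace ℝ (Fin Kstar) := fstar (fun _ => 0) with hy₀def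
  have hy₀ : y₀ ∈ Y := hfstar_maps _ hx₀
  set ufun : (Fin p → ℝ) → ℝ := fun x => g (fstar x) y₀ - g y₀ y₀ / 2 with hufun
  set kk : (Fin p → ℝ) → (Fin p → ℝ) → ℝ :=
    fun x x' => g (fstar x) (fstar x') - g (fstar x) y₀ - g (fstar x') y₀ + g y₀ y₀ with hkk
  have hdec : ∀ (x x' : Fin p → ℝ),
      g (fstar x) (fstar x') = kk x x' + ufun x + ufun x' := by
    intro x x'; rw [hkk, hufun]; ring
  -- continuity
  have hfc : ContinuousOn fstar (cube p M) := hfstar_cont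
  have hgpair : ContinuousOn
      (fun q : (Fin p → ℝ) × (Fin p → ℝ) => g (fstar q.1) (fstar q.2))
      ((cube p M) ×ˢ (cube p M)) := by
    have h1 : ContinuousOn (fun q : (Fin p → ℝ) × (Fin p → ℝ) => (fstar q.1, fstar q.2))
        ((cube p M) ×ˢ (cube p M)) :=
      ContinuousOn.prodMk (hfc.comp continuousOn_fst (fun q hq => hq.1))
        (hfc.comp continuousOn_snd (fun q hq => hq.2))
    exact hg_cont.comp h1 (fun q hq => ⟨hfstar_maps _ hq.1, hfstar_maps _ hq.2⟩)
  have hu1 : ContinuousOn (fun x => g (fstar x) y₀) (cube p M) := by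
    have h2 : ContinuousOn (fun y : EuclideanSpace ℝ (Fin Kstar) => g y y₀) Y := by
      have h3 : ContinuousOn (fun y : EuclideanSpace ℝ (Fin Kstar) => (y, y₀)) Y :=
        ContinuousOn.prodMk continuousOn_id continuousOn_const
      exact hg_cont.comp h3 (fun y hyy => ⟨hyy, hy₀⟩)
    exact h2.comp hfc (fun x hx => hfstar_maps _ hx)
  have hucont : ContinuousOn ufun (cube p M) := hu1.sub continuousOn_const
  have hkkpair : ContinuousOn (fun q : (Fin p → ℝ) × (Fin p → ℝ) => kk q.1 q.2)
      ((cube p M) ×ˢ (cube p M)) := by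
    rw [hkk]
    exact ((hgpair.sub (hu1.comp continuousOn_fst (fun q hq => hq.1))).sub
      (hu1.comp continuousOn_snd (fun q hq => hq.2))).add continuousOn_const
  -- uniform continuity of kk
  have hcomp2 : IsCompact ((cube p M) ×ˢ (cube p M)) :=
    (cube_compact p M).prod (cube_compact p M)
  have huc := hcomp2.uniformContinuousOn_of_continuous hkkpair
  rw [Metric.uniformContinuousOn_iff] at huc
  obtain ⟨δ₂, hδ₂0, hδ₂⟩ := huc (ε/4) (by positivity)
  -- partition of unity
  set N : ℕ := ⌈2*M/δ₂⌉₊ + 1 with hNdef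
  have hN0 : 0 < N := Nat.succ_pos _
  have hN' : (0:ℝ) < N := by exact_mod_cast hN0
  set μh : ℝ := 2*M/N with hμh
  have hμh0 : 0 < μh := by positivity
  have hμhδ : μh < δ₂ := by
    have h1 : 2*M/δ₂ < N := by
      have h2 := Nat.le_ceil (2*M/δ₂)
      have h3 : ((⌈2*M/δ₂⌉₊ : ℕ) : ℝ) < N := by
        rw [hNdef]; push_cast; linarith
      linarith
    rw [hμh, div_lt_iff₀ hN']
    rw [div_lt_iff₀ hδ₂0] at h1
    nlinarith
  set gp : ℕ → ℝ := fun j => -M + j * μh with hgp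
  set χ : (Fin p → Fin (N+1)) → (Fin p → ℝ) → ℝ :=
    fun v x => ∏ i, hat μh (gp (v i)) (x i) with hχdef
  set xv : (Fin p → Fin (N+1)) → (Fin p → ℝ) := fun v i => gp (v i) with hxvdef
  have hNμ : (N:ℝ) * μh = 2*M := by rw [hμh]; field_simp
  have hxv_cube : ∀ v, xv v ∈ cube p M := by
    intro v i
    have hj0 : (0:ℝ) ≤ ((v i : ℕ) : ℝ) := Nat.cast_nonneg _
    have hj : ((v i : ℕ) : ℝ) ≤ N := by
      exact_mod_cast Nat.lt_succ_iff.mp (v i).isLt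
    simp only [hxvdef, hgp]
    rw [abs_le]
    constructor
    · nlinarith
    · nlinarith
  have hχ_nonneg : ∀ v x, 0 ≤ χ v x := fun v x =>
    Finset.prod_nonneg (fun i _ => hat_nonneg _ _ _)
  have hχ_le_one : ∀ v x, χ v x ≤ 1 := fun v x =>
    Finset.prod_le_one (fun i _ => hat_nonneg _ _ _) (fun i _ => hat_le_one _ _ _ hμh0)
  have hχ_sum : ∀ x ∈ cube p M, ∑ v : Fin p → Fin (N+1), χ v x = 1 := by
    intro x hx
    have h1 : ∀ i : Fin p, ∑ j : Fin (N+1), hat μh (gp (j : ℕ)) (x i) = 1 := by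
      intro i
      rw [Fin.sum_univ_eq_sum_range (fun j => hat μh (gp j) (x i)) (N+1)]
      have hxi := abs_le.mp (hx i)
      have hμeq : μh = 2*M/(N:ℝ) := hμh
      have hgpeq : ∀ j : ℕ, gp j = -M + j * (2*M/(N:ℝ)) := by
        intro j; simp only [hgp, hμeq]
      calc ∑ j ∈ Finset.range (N+1), hat μh (gp j) (x i)
          = ∑ j ∈ Finset.range (N+1), hat (2*M/(N:ℝ)) (-M + j * (2*M/(N:ℝ))) (x i) := by
            apply Finset.sum_congr rfl; intro j _
            rw [hgpeq j, hμeq]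
      _ = 1 := hat_sum M hM N hN0 (x i) ⟨hxi.1, hxi.2⟩
    have h2 := Finset.prod_univ_sum (fun _ : Fin p => (Finset.univ : Finset (Fin (N+1))))
      (fun i j => hat μh (gp (j : ℕ)) (x i))
    rw [Fintype.piFinset_univ] at h2
    calc ∑ v : Fin p → Fin (N+1), χ v x
        = ∏ i, ∑ j : Fin (N+1), hat μh (gp (j : ℕ)) (x i) := h2.symm
    _ = ∏ i : Fin p, (1:ℝ) := Finset.prod_congr rfl (fun i _ => h1 i)
    _ = 1 := Finset.prod_const_one
  have hχ_supp : ∀ v x, χ v x ≠ 0 → dist x (xv v) ≤ μh := by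
    intro v x hne
    rw [dist_pi_le_iff hμh0.le]
    intro i
    rw [Real.dist_eq]
    apply hat_ne_zero _ _ _ hμh0
    intro h0
    exact hne (Finset.prod_eq_zero (Finset.mem_univ i) h0)
  -- PSD matrix
  set Mat : Matrix (Fin p → Fin (N+1)) (Fin p → Fin (N+1)) ℝ :=
    Matrix.of (fun v w => kk (xv v) (xv w)) with hMatdef
  have hkk_symm : ∀ v w, kk (xv w) (xv v) = kk (xv v) (xv w) := by
    intro v w
    simp only [hkk]
    rw [hg_symm (fstar (xv w)) (hfstar_maps _ (hxv_cube w))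
      (fstar (xv v)) (hfstar_maps _ (hxv_cube v))]
    ring
  have hMatPSD : Mat.PosSemidef := by
    rw [Matrix.posSemidef_iff_dotProduct_mulVec]
    constructor
    · ext v w
      simp only [Matrix.conjTranspose_apply, star_trivial, hMatdef, Matrix.of_apply]
      exact hkk_symm v w
    · intro z
      have h0 := cpd_centered Y g hg_symm hg_cpd y₀ hy₀
        (ι := Fin p → Fin (N+1)) z (fun v => fstar (xv v))
        (fun v => hfstar_maps _ (hxv_cube v))
      have h1 : dotProduct (star z) (Mat.mulVec z)
          = ∑ v, ∑ w, z v * z w * kk (xv v) (xv w) := by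
        simp only [dotProduct, Matrix.mulVec, Pi.star_apply, star_trivial,
          hMatdef, Matrix.of_apply, Finset.mul_sum]
        apply Finset.sum_congr rfl; intro v _
        apply Finset.sum_congr rfl; intro w _
        ring
      rw [h1]
      simpa only [hkk] using h0
  obtain ⟨L, hL⟩ : ∃ L : Matrix _ _ ℝ, Mat = L.conjTranspose * L := by
    open scoped MatrixOrder in
    exact CStarAlgebra.nonneg_iff_eq_star_mul_self.mp hMatPSD.nonneg
  have hMatL : ∀ v w, Mat v w = ∑ l, L l v * L l w := by
    intro v w
    rw [hL]
    simp [Matrix.mul_apply, Matrix.conjTranspose_apply]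
  -- feature functions
  set K : ℕ := Fintype.card (Fin p → Fin (N+1)) with hKdef
  set eqv : Fin K ≃ (Fin p → Fin (N+1)) := (Fintype.equivFin _).symm with heqv
  set afun : (Fin p → Fin (N+1)) → (Fin p → ℝ) → ℝ :=
    fun l x => ∑ v, χ v x * L l v with hafun
  have hacont : ∀ l, Continuous (afun l) := by
    intro l
    apply continuous_finset_sum
    intro v _
    apply Continuous.mul _ continuous_const
    apply continuous_finset_prod
    intro i _
    have h1 : Continuous (fun t : ℝ => hat μh (gp (v i)) t) := by
      unfold SIPS.hat
      exact continuous_const.max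
        ((continuous_const.sub (((continuous_id.sub continuous_const).abs).div_const _)))
    exact h1.comp (continuous_apply i)
  set CL : ℝ := 1 + ∑ l, ∑ v, |L l v| with hCL
  have hCL1 : 1 ≤ CL := by
    rw [hCL]
    have : (0:ℝ) ≤ ∑ l, ∑ v, |L l v| :=
      Finset.sum_nonneg (fun l _ => Finset.sum_nonneg (fun v _ => abs_nonneg _))
    linarith
  have habound : ∀ l x, |afun l x| ≤ CL := by
    intro l x
    calc |afun l x| ≤ ∑ v, |χ v x * L l v| := Finset.abs_sum_le_sum_abs _ _
    _ ≤ ∑ v, |L l v| := by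
        apply Finset.sum_le_sum
        intro v _
        rw [abs_mul, abs_of_nonneg (hχ_nonneg v x)]
        calc χ v x * |L l v| ≤ 1 * |L l v| :=
              mul_le_mul_of_nonneg_right (hχ_le_one v x) (abs_nonneg _)
        _ = |L l v| := one_mul _
    _ ≤ CL := by
        rw [hCL]
        have h2 : ∑ v, |L l v| ≤ ∑ l', ∑ v, |L l' v| :=
          Finset.single_le_sum (f := fun l' => ∑ v, |L l' v|)
            (fun l' (_ : l' ∈ Finset.univ) =>
              Finset.sum_nonneg (fun v _ => abs_nonneg _)) (Finset.mem_univ l)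
        linarith
  -- kernel approximation
  have hfactor : ∀ (f f' : (Fin p → Fin (N+1)) → ℝ) (c0 : ℝ),
      (∑ v, f v) * ((∑ w, f' w) * c0) = ∑ v, ∑ w, (f v * f' w) * c0 := by
    intro f f' c0
    rw [Finset.sum_mul]
    apply Finset.sum_congr rfl; intro v _
    rw [Finset.sum_mul, Finset.mul_sum]
    apply Finset.sum_congr rfl; intro w _
    ring
  have hrank : ∀ x ∈ cube p M, ∀ x' ∈ cube p M,
      |kk x x' - ∑ l, afun l x * afun l x'| ≤ ε/4 := by
    intro x hx x' hx'
    have h1 : ∑ l, afun l x * afun l x' = ∑ v, ∑ w, χ v x * χ w x' * Mat v w := by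
      calc ∑ l, afun l x * afun l x'
          = ∑ l, ∑ v, ∑ w, (χ v x * L l v) * (χ w x' * L l w) := by
            apply Finset.sum_congr rfl; intro l _
            rw [hafun, Finset.sum_mul_sum]
      _ = ∑ v, ∑ l, ∑ w, (χ v x * L l v) * (χ w x' * L l w) := Finset.sum_comm
      _ = ∑ v, ∑ w, ∑ l, (χ v x * L l v) * (χ w x' * L l w) :=
            Finset.sum_congr rfl (fun v _ => Finset.sum_comm)
      _ = ∑ v, ∑ w, χ v x * χ w x' * Mat v w := by
            apply Finset.sum_congr rfl; intro v _
            apply Finset.sum_congr rfl; intro w _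
            rw [hMatL v w, Finset.mul_sum]
            apply Finset.sum_congr rfl; intro l _
            ring
    have h2 : kk x x' - ∑ v, ∑ w, χ v x * χ w x' * Mat v w
        = ∑ v, ∑ w, χ v x * χ w x' * (kk x x' - Mat v w) := by
      have h3 : ∑ v, ∑ w, χ v x * χ w x' * (kk x x' - Mat v w)
          = (∑ v, ∑ w, (χ v x * χ w x') * kk x x')
            - ∑ v, ∑ w, χ v x * χ w x' * Mat v w := by
        rw [← Finset.sum_sub_distrib]
        apply Finset.sum_congr rfl; intro v _
        rw [← Finset.sum_sub_distrib]
        apply Finset.sum_congr rfl; intro w _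
        ring
      have h4 : ∑ v, ∑ w, (χ v x * χ w x') * kk x x' = kk x x' := by
        rw [← hfactor, hχ_sum x hx, hχ_sum x' hx', one_mul, one_mul]
      rw [h3, h4]
    rw [h1, h2]
    have hterm : ∀ v w, |χ v x * χ w x' * (kk x x' - Mat v w)|
        ≤ χ v x * χ w x' * (ε/4) := by
      intro v w
      rcases eq_or_ne (χ v x) 0 with h0 | h0
      · rw [h0]; simp
      rcases eq_or_ne (χ w x') 0 with h0' | h0'
      · rw [h0']; simp
      have hd1 : dist x (xv v) ≤ μh := hχ_supp v x h0
      have hd2 : dist x' (xv w) ≤ μh := hχ_supp w x' h0'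
      have hdp : dist ((x, x') : (Fin p → ℝ) × (Fin p → ℝ)) ((xv v, xv w)) < δ₂ := by
        rw [Prod.dist_eq]
        apply lt_of_le_of_lt (max_le hd1 hd2) hμhδ
      have hkkd := hδ₂ (x, x') ⟨hx, hx'⟩ (xv v, xv w) ⟨hxv_cube v, hxv_cube w⟩ hdp
      rw [Real.dist_eq] at hkkd
      have hkkd' : |kk x x' - Mat v w| ≤ ε/4 := by
        have : Mat v w = kk (xv v) (xv w) := rfl
        rw [this]
        exact le_of_lt hkkd
      rw [abs_mul, abs_of_nonneg (mul_nonneg (hχ_nonneg v x) (hχ_nonneg w x'))]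
      exact mul_le_mul_of_nonneg_left hkkd' (mul_nonneg (hχ_nonneg v x) (hχ_nonneg w x'))
    calc |∑ v, ∑ w, χ v x * χ w x' * (kk x x' - Mat v w)|
        ≤ ∑ v, |∑ w, χ v x * χ w x' * (kk x x' - Mat v w)| := Finset.abs_sum_le_sum_abs _ _
    _ ≤ ∑ v, ∑ w, |χ v x * χ w x' * (kk x x' - Mat v w)| :=
        Finset.sum_le_sum (fun v _ => Finset.abs_sum_le_sum_abs _ _)
    _ ≤ ∑ v, ∑ w, χ v x * χ w x' * (ε/4) :=
        Finset.sum_le_sum (fun v _ => Finset.sum_le_sum (fun w _ => hterm v w))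
    _ = (∑ v, χ v x) * ((∑ w, χ w x') * (ε/4)) := by
        rw [hfactor]
    _ = ε/4 := by rw [hχ_sum x hx, hχ_sum x' hx', one_mul, one_mul]
  -- neural networks
  set δf : ℝ := min 1 (ε / (4 * (K * (2*CL + 1)) + 1)) with hδf
  have hδf0 : 0 < δf := by
    apply lt_min one_pos
    have hK0 : (0:ℝ) ≤ K := Nat.cast_nonneg _
    positivity
  have hδf1 : δf ≤ 1 := min_le_left _ _
  have hδfK : (K:ℝ) * ((2*CL+1) * δf) ≤ ε/4 := by
    have h1 : δf ≤ ε / (4 * (K * (2*CL + 1)) + 1) := min_le_right _ _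
    have hK0 : (0:ℝ) ≤ K := Nat.cast_nonneg _
    have hpos : (0:ℝ) < 4 * (K * (2*CL + 1)) + 1 := by nlinarith
    have h2 : (K:ℝ) * ((2*CL+1) * δf) ≤ (K * (2*CL+1)) * (ε / (4 * (K * (2*CL + 1)) + 1)) := by
      rw [← mul_assoc]
      apply mul_le_mul_of_nonneg_left h1
      nlinarith
    calc (K:ℝ) * ((2*CL+1) * δf) ≤ (K * (2*CL+1)) * (ε / (4 * (K * (2*CL + 1)) + 1)) := h2
    _ ≤ ε/4 := by
        rw [← mul_div_assoc, div_le_iff₀ hpos]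
        nlinarith
  obtain ⟨mf, A, B, c, hABc⟩ := vecUAT hσ hM K (fun l => afun (eqv l))
    (fun l => (hacont _).continuousOn) hδf0
  obtain ⟨qU, ⟨mu, e, F, o, rfl⟩, hqU⟩ := uatP hσ hM ufun hucont (ε := ε/8) (by positivity)
  refine ⟨K, mf, mu, A, B, c, e, F, o, ?_⟩
  intro x hx x' hx'
  rw [hcube_eq] at hx hx'
  -- notation
  set fN : Fin K → ℝ := fun k => ∑ i, A k i * σ (B.mulVec x i + c i) with hfN
  set fN' : Fin K → ℝ := fun k => ∑ i, A k i * σ (B.mulVec x' i + c i) with hfN'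
  have hdot : dotProduct (A.mulVec fun i => σ (B.mulVec x i + c i))
      (A.mulVec fun i => σ (B.mulVec x' i + c i)) = ∑ k, fN k * fN' k := rfl
  have huNN : dotProduct e (fun i => σ (F.mulVec x i + o i)) = netP σ p e F o x := rfl
  have huNN' : dotProduct e (fun i => σ (F.mulVec x' i + o i)) = netP σ p e F o x' := rfl
  have htrans : ∑ l : Fin p → Fin (N+1), afun l x * afun l x'
      = ∑ k : Fin K, afun (eqv k) x * afun (eqv k) x' :=
    (Equiv.sum_comp eqv (fun l => afun l x * afun l x')).symm
  have hinner : |(∑ l : Fin p → Fin (N+1), afun l x * afun l x') - ∑ k, fN k * fN' k| ≤ ε/4 := by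
    rw [htrans, ← Finset.sum_sub_distrib]
    have hterm : ∀ k : Fin K, |afun (eqv k) x * afun (eqv k) x' - fN k * fN' k|
        ≤ (2*CL+1) * δf := by
      intro k
      have ha1 := hABc k x hx
      have ha2 := hABc k x' hx'
      have hb1 : |afun (eqv k) x| ≤ CL := habound _ _
      have hb2 : |afun (eqv k) x'| ≤ CL := habound _ _
      have hf2 : |fN' k| ≤ CL + 1 := by
        have t1 := abs_le.mp hb2
        have t2 := abs_le.mp ha2
        rw [abs_le]
        constructor <;> [linarith; linarith]
      calc |afun (eqv k) x * afun (eqv k) x' - fN k * fN' k|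
          = |afun (eqv k) x * (afun (eqv k) x' - fN' k)
            + (afun (eqv k) x - fN k) * fN' k| := by ring_nf
      _ ≤ |afun (eqv k) x * (afun (eqv k) x' - fN' k)|
            + |(afun (eqv k) x - fN k) * fN' k| := abs_add_le _ _
      _ = |afun (eqv k) x| * |afun (eqv k) x' - fN' k|
            + |afun (eqv k) x - fN k| * |fN' k| := by rw [abs_mul, abs_mul]
      _ ≤ CL * δf + δf * (CL + 1) := by
          apply add_le_add
          · exact mul_le_mul hb1 ha2 (abs_nonneg _) (by linarith)
          · exact mul_le_mul ha1 hf2 (abs_nonneg _) (by linarith)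
      _ = (2*CL+1) * δf := by ring
    calc |∑ k, (afun (eqv k) x * afun (eqv k) x' - fN k * fN' k)|
        ≤ ∑ k, |afun (eqv k) x * afun (eqv k) x' - fN k * fN' k| :=
          Finset.abs_sum_le_sum_abs _ _
    _ ≤ (Finset.univ : Finset (Fin K)).card • ((2*CL+1) * δf) :=
          Finset.sum_le_card_nsmul _ _ _ (fun k _ => hterm k)
    _ = (K:ℝ) * ((2*CL+1) * δf) := by
          rw [Finset.card_univ, Fintype.card_fin, nsmul_eq_mul]
    _ ≤ ε/4 := hδfK
  have hu_err : |ufun x - netP σ p e F o x| ≤ ε/8 := hqU x hx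
  have hu_err' : |ufun x' - netP σ p e F o x'| ≤ ε/8 := hqU x' hx'
  have hfinal : |kk x x' + ufun x + ufun x'
      - (∑ k, fN k * fN' k + netP σ p e F o x + netP σ p e F o x')|
      ≤ ε/4 + ε/4 + ε/8 + ε/8 := by
    have heq : kk x x' + ufun x + ufun x'
        - (∑ k, fN k * fN' k + netP σ p e F o x + netP σ p e F o x')
        = ((kk x x' - ∑ l : Fin p → Fin (N+1), afun l x * afun l x')
          + ((∑ l : Fin p → Fin (N+1), afun l x * afun l x') - ∑ k, fN k * fN' k))
          + (ufun x - netP σ p e F o x) + (ufun x' - netP σ p e F o x') := by ring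
    rw [heq]
    have b1 := hrank x hx x' hx'
    have b4 := abs_add_le ((kk x x' - ∑ l : Fin p → Fin (N+1), afun l x * afun l x')
      + ((∑ l : Fin p → Fin (N+1), afun l x * afun l x') - ∑ k, fN k * fN' k))
      (ufun x - netP σ p e F o x)
    have b5 := abs_add_le (((kk x x' - ∑ l : Fin p → Fin (N+1), afun l x * afun l x')
      + ((∑ l : Fin p → Fin (N+1), afun l x * afun l x') - ∑ k, fN k * fN' k))
      + (ufun x - netP σ p e F o x)) (ufun x' - netP σ p e F o x')
    have b6 := abs_add_le (kk x x' - ∑ l : Fin p → Fin (N+1), afun l x * afun l x')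
      ((∑ l : Fin p → Fin (N+1), afun l x * afun l x') - ∑ k, fN k * fN' k)
    linarith [hinner, hu_err, hu_err']
  rw [hdot, huNN, huNN', hdec x x']
  linarith [hfinal]
end
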